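/- arXiv:1902.02931 — 8 statements merged into one kernel-verified Lean document; each statement's English description precedes it below -/
import Mathlib

section
/- For every integer n ≥ 2 and every real λ ∈ [0,1], the inequality ∑_{j=0}^{n} λ^j − ∑_{k=1}^{n−1} M(⌊(n−1)/k⌋)·(∑_{j=0}^{n−k} λ^j) ≥ 0 holds, with equality if and only if λ = 0. -/
open Finset Real

def Mertens (N : ℕ) : ℤ := ∑ i ∈ Finset.Icc 1 N, ArithmeticFunction.moebius i

open ArithmeticFunction
open scoped ArithmeticFunction.Moebius

-- hyperbola swap
lemma swap_lemma (N : ℕ) (f : ℕ → ℕ → ℝ) :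
    ∑ k ∈ Icc 1 N, ∑ d ∈ Icc 1 (N / k), f k d
      = ∑ m ∈ Icc 1 N, ∑ d ∈ m.divisors, f (m / d) d := by
  rw [Finset.sum_sigma', Finset.sum_sigma']
  refine Finset.sum_nbij' (fun p => ⟨p.1 * p.2, p.2⟩) (fun p => ⟨p.1 / p.2, p.2⟩) ?_ ?_ ?_ ?_ ?_
  · rintro ⟨k, d⟩ h
    simp only [mem_sigma, mem_Icc] at h
    obtain ⟨⟨hk1, hkN⟩, hd1, hdN⟩ := h
    simp only [mem_sigma, mem_Icc, Nat.mem_divisors]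
    have hkd : k * d ≤ N := by
      rw [Nat.le_div_iff_mul_le (show 0 < k by omega)] at hdN
      calc k * d = d * k := mul_comm _ _
      _ ≤ N := hdN
    exact ⟨⟨Nat.one_le_iff_ne_zero.2 (Nat.mul_ne_zero (by omega) (by omega)), hkd⟩, ⟨⟨k, mul_comm k d⟩, Nat.mul_ne_zero (by omega) (by omega)⟩⟩
  · rintro ⟨m, d⟩ h
    simp only [mem_sigma, mem_Icc, Nat.mem_divisors] at h
    obtain ⟨⟨hm1, hmN⟩, hdm, hm0⟩ := h
    have hd0 : 0 < d := Nat.pos_of_dvd_of_pos hdm (by omega)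
    simp only [mem_sigma, mem_Icc]
    refine ⟨⟨?_, ?_⟩, hd0, ?_⟩
    · exact Nat.one_le_div_iff hd0 |>.2 (Nat.le_of_dvd (by omega) hdm)
    · exact le_trans (Nat.div_le_self _ _) hmN
    · rw [Nat.le_div_iff_mul_le]
      · rw [mul_comm, Nat.div_mul_cancel hdm]; exact hmN
      · exact Nat.div_pos (Nat.le_of_dvd (by omega) hdm) hd0
  · rintro ⟨k, d⟩ h
    simp only [mem_sigma, mem_Icc] at h
    have : 0 < d := by omega
    simp [Nat.mul_div_cancel_left, Nat.mul_div_cancel _ this]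
  · rintro ⟨m, d⟩ h
    simp only [mem_sigma, mem_Icc, Nat.mem_divisors] at h
    simp [Nat.div_mul_cancel h.2.1]
  · rintro ⟨k, d⟩ h
    simp only [mem_sigma, mem_Icc] at h
    have : 0 < d := by omega
    simp [Nat.mul_div_cancel _ this]

lemma sum_div_moeb (m : ℕ) :
    ∑ d ∈ m.divisors, (μ d : ℤ) = if m = 1 then 1 else 0 := by
  rw [← ArithmeticFunction.coe_mul_zeta_apply, ArithmeticFunction.moebius_mul_coe_zeta,
    ArithmeticFunction.one_apply]

lemma sum_div_moeb_real (m : ℕ) :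
    ∑ d ∈ m.divisors, (μ d : ℝ) = if m = 1 then 1 else 0 := by
  have h := congrArg (fun z : ℤ => (z : ℝ)) (sum_div_moeb m)
  push_cast at h
  simpa using h

lemma mertens_cast (M : ℕ) : (Mertens M : ℝ) = ∑ d ∈ Icc 1 M, (μ d : ℝ) := by
  unfold Mertens; push_cast; rfl

lemma mertens_sum (N : ℕ) (hN : 1 ≤ N) :
    ∑ k ∈ Icc 1 N, (Mertens (N / k) : ℝ) = 1 := by
  simp_rw [mertens_cast]
  rw [swap_lemma N (fun _ d => (μ d : ℝ))]
  simp_rw [sum_div_moeb_real]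
  rw [Finset.sum_ite_eq' (Icc 1 N) 1 (fun _ => (1:ℝ))]
  simp [hN]

-- counting lemma
lemma counting (m : ℕ) (j : ℕ) :
    0 ≤ ∑ d ∈ m.divisors, (μ d : ℝ) * ((m / d).choose j : ℝ) := by
  rcases Nat.eq_zero_or_pos m with hm | hm
  · simp [hm]
  have key : ∀ d ∈ m.divisors, ((m / d).choose j : ℝ)
      = ∑ S ∈ (Ioc 0 m).powersetCard j, (if ∀ x ∈ S, d ∣ x then (1:ℝ) else 0) := by
    intro d hd
    rw [Finset.sum_boole]
    congr 1
    have hUcard : ((Ioc 0 m).filter (d ∣ ·)).card = m / d := Nat.Ioc_filter_dvd_card_eq_div m d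
    rw [← hUcard, ← Finset.card_powersetCard]
    congr 1
    ext S
    simp only [Finset.mem_powersetCard, Finset.mem_filter, Finset.subset_iff, Finset.mem_filter]
    constructor
    · rintro ⟨hsub, hcard⟩
      exact ⟨⟨fun {x} hx => (hsub hx).1, hcard⟩, fun x hx => (hsub hx).2⟩
    · rintro ⟨⟨hsub, hcard⟩, hdvd⟩
      exact ⟨fun {x} hx => ⟨hsub hx, hdvd x hx⟩, hcard⟩
  have step : ∀ S : Finset ℕ, ∑ d ∈ m.divisors, (μ d : ℝ) * (if ∀ x ∈ S, d ∣ x then (1:ℝ) else 0)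
      = if Nat.gcd (S.gcd _root_.id) m = 1 then 1 else 0 := by
    intro S
    have h1 : ∀ d ∈ m.divisors, ((μ d : ℝ) * (if ∀ x ∈ S, d ∣ x then (1:ℝ) else 0))
        = (if d ∣ Nat.gcd (S.gcd _root_.id) m then (μ d : ℝ) else 0) := by
      intro d hd
      have hdm : d ∣ m := (Nat.mem_divisors.1 hd).1
      by_cases hc : ∀ x ∈ S, d ∣ x
      · rw [if_pos hc, if_pos, mul_one]
        exact Nat.dvd_gcd (Finset.dvd_gcd (fun b hb => hc b hb)) hdm
      · rw [if_neg hc, if_neg, mul_zero]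
        intro hcon
        exact hc fun x hx => Finset.dvd_gcd_iff.1 (dvd_trans hcon (Nat.gcd_dvd_left _ _)) x hx
    rw [Finset.sum_congr rfl h1, ← Finset.sum_filter,
      Nat.divisors_filter_dvd_of_dvd (by omega) (Nat.gcd_dvd_right _ _)]
    exact sum_div_moeb_real _
  calc ∑ d ∈ m.divisors, (μ d : ℝ) * ((m / d).choose j : ℝ)
      = ∑ d ∈ m.divisors, ∑ S ∈ (Ioc 0 m).powersetCard j,
          (μ d : ℝ) * (if ∀ x ∈ S, d ∣ x then (1:ℝ) else 0) := by
        refine Finset.sum_congr rfl fun d hd => ?_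
        rw [key d hd, Finset.mul_sum]
    _ = ∑ S ∈ (Ioc 0 m).powersetCard j, ∑ d ∈ m.divisors,
          (μ d : ℝ) * (if ∀ x ∈ S, d ∣ x then (1:ℝ) else 0) := Finset.sum_comm
    _ = ∑ S ∈ (Ioc 0 m).powersetCard j,
          (if Nat.gcd (S.gcd _root_.id) m = 1 then (1:ℝ) else 0) :=
        Finset.sum_congr rfl fun S _ => step S
    _ ≥ 0 := Finset.sum_nonneg fun S _ => by positivity

lemma A_nonneg (m : ℕ) (hm : 1 ≤ m) (y : ℝ) (hy : 1 ≤ y) :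
    0 ≤ ∑ d ∈ m.divisors, (μ d : ℝ) * y ^ (m / d) := by
  set x := y - 1 with hxdef
  have hx0 : 0 ≤ x := by simp [hxdef]; linarith
  have expand : ∀ d ∈ m.divisors, y ^ (m / d)
      = ∑ j ∈ range (m + 1), ((m / d).choose j : ℝ) * x ^ j := by
    intro d hd
    have he : m / d ≤ m := Nat.div_le_self _ _
    have hxy : x + 1 = y := by simp [hxdef]
    have h2 : ∑ j ∈ range (m / d + 1), x ^ j * (1:ℝ) ^ (m / d - j) * ((m / d).choose j)
        = ∑ j ∈ range (m + 1), x ^ j * (1:ℝ) ^ (m / d - j) * ((m / d).choose j) := by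
      apply Finset.sum_subset (Finset.range_subset_range.2 (by omega))
      intro j hjm hje
      simp only [Finset.mem_range, not_lt] at hje
      rw [Nat.choose_eq_zero_of_lt (by omega)]
      simp
    rw [← hxy, add_pow, h2]
    exact Finset.sum_congr rfl fun j hj => by push_cast; ring
  calc ∑ d ∈ m.divisors, (μ d : ℝ) * y ^ (m / d)
      = ∑ d ∈ m.divisors, ∑ j ∈ range (m + 1),
          (μ d : ℝ) * (((m / d).choose j : ℝ) * x ^ j) := by
        refine Finset.sum_congr rfl fun d hd => ?_
        rw [expand d hd, Finset.mul_sum]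
    _ = ∑ j ∈ range (m + 1), (∑ d ∈ m.divisors,
          (μ d : ℝ) * ((m / d).choose j : ℝ)) * x ^ j := by
        rw [Finset.sum_comm]
        exact Finset.sum_congr rfl fun j _ => by rw [Finset.sum_mul]; exact Finset.sum_congr rfl fun d _ => by ring
    _ ≥ 0 := Finset.sum_nonneg fun j _ => mul_nonneg (counting m j) (pow_nonneg hx0 j)


theorem stmt2 (n : ℕ) (hn : 2 ≤ n) (lam : ℝ) (h0 : 0 ≤ lam) (h1 : lam ≤ 1) :
    (∑ j ∈ range (n + 1), lam ^ j
      - ∑ k ∈ Icc 1 (n - 1), (Mertens ((n - 1) / k) : ℝ) * ∑ j ∈ range (n - k + 1), lam ^ j ≥ 0)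
    ∧ ((∑ j ∈ range (n + 1), lam ^ j
      - ∑ k ∈ Icc 1 (n - 1), (Mertens ((n - 1) / k) : ℝ) * ∑ j ∈ range (n - k + 1), lam ^ j = 0)
        ↔ lam = 0) := by
  have hN1 : 1 ≤ n - 1 := by omega
  set N := n - 1 with hNdef
  set E := (∑ j ∈ range (n + 1), lam ^ j)
      - ∑ k ∈ Icc 1 N, (Mertens (N / k) : ℝ) * ∑ j ∈ range (n - k + 1), lam ^ j with hE
  have hswap : ∀ g : ℕ → ℝ, ∑ k ∈ Icc 1 N, (Mertens (N / k) : ℝ) * g k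
      = ∑ m ∈ Icc 1 N, ∑ d ∈ m.divisors, (μ d : ℝ) * g (m / d) := by
    intro g
    simp_rw [mertens_cast, Finset.sum_mul]
    exact swap_lemma N fun k d => (μ d : ℝ) * g k
  have hdiv_le : ∀ {m d : ℕ}, m ∈ Icc 1 N → d ∈ m.divisors → m / d ≤ N := by
    intro m d hm _
    exact le_trans (Nat.div_le_self _ _) (mem_Icc.1 hm).2
  -- zero case
  have hzero : lam = 0 → E = 0 := by
    intro hl
    have hg : ∀ m : ℕ, ∑ j ∈ range (m + 1), lam ^ j = 1 := by
      intro m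
      rw [hl, Finset.sum_eq_single_of_mem 0 (Finset.mem_range.2 (Nat.succ_pos m))]
      · norm_num
      · intro j _ hj0; exact zero_pow hj0
    rw [hE]
    have h2 : ∀ k, (∑ j ∈ range (n - k + 1), lam ^ j) = 1 := fun k => hg (n - k)
    simp_rw [h2, mul_one]
    rw [mertens_sum N hN1, hg n]
    ring
  -- positive case
  have hpos : 0 < lam → 0 < E := by
    intro hl
    rcases eq_or_lt_of_le h1 with heq | hlt
    · -- lam = 1
      have hg1 : ∀ m : ℕ, (∑ j ∈ range (m + 1), lam ^ j) = (m : ℝ) + 1 := by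
        intro m
        rw [heq]
        simp only [one_pow, Finset.sum_const, Finset.card_range, nsmul_eq_mul, mul_one]
        push_cast
        ring
      have hEeq : E = ∑ m ∈ Icc 1 N, ∑ d ∈ m.divisors,
          (μ d : ℝ) * ((m / d).choose 1 : ℝ) := by
        rw [hE, hg1 n]
        have h2 : ∀ k, (∑ j ∈ range (n - k + 1), lam ^ j) = ((n - k : ℕ) : ℝ) + 1 :=
          fun k => hg1 (n - k)
        simp_rw [h2]
        rw [hswap (fun k => ((n - k : ℕ) : ℝ) + 1)]
        have h3 : ∀ m ∈ Icc 1 N, ∑ d ∈ m.divisors, (μ d : ℝ) * (((n - m / d : ℕ) : ℝ) + 1)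
            = ((n : ℝ) + 1) * (if m = 1 then (1:ℝ) else 0)
              - ∑ d ∈ m.divisors, (μ d : ℝ) * ((m / d).choose 1 : ℝ) := by
          intro m hm
          rw [← sum_div_moeb_real, Finset.mul_sum, ← Finset.sum_sub_distrib]
          refine Finset.sum_congr rfl fun d hd => ?_
          have hle : m / d ≤ N := hdiv_le hm hd
          have hcast : ((n - m / d : ℕ) : ℝ) = (n : ℝ) - (m / d : ℕ) :=
            Nat.cast_sub (by omega)
          rw [hcast, Nat.choose_one_right]
          ring
        rw [Finset.sum_congr rfl h3, Finset.sum_sub_distrib, ← Finset.mul_sum,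
          Finset.sum_ite_eq' (Icc 1 N) 1 (fun _ => (1:ℝ))]
        simp only [mem_Icc, le_refl, hN1, and_self, if_true]
        ring
      rw [hEeq]
      have h1term : ∑ d ∈ (1:ℕ).divisors, (μ d : ℝ) * (((1:ℕ) / d).choose 1 : ℝ) = 1 := by
        simp [Nat.divisors_one]
      calc (0:ℝ) < 1 := one_pos
        _ = ∑ d ∈ (1:ℕ).divisors, (μ d : ℝ) * (((1:ℕ) / d).choose 1 : ℝ) := h1term.symm
        _ ≤ ∑ m ∈ Icc 1 N, ∑ d ∈ m.divisors, (μ d : ℝ) * ((m / d).choose 1 : ℝ) :=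
          Finset.single_le_sum (f := fun m => ∑ d ∈ m.divisors, (μ d : ℝ) * ((m / d).choose 1 : ℝ))
            (fun m _ => counting m 1) (mem_Icc.2 ⟨le_refl 1, hN1⟩)
    · -- lam < 1
      have hgm : ∀ m : ℕ, (∑ j ∈ range (m + 1), lam ^ j) * (1 - lam) = 1 - lam ^ (m + 1) := by
        intro m
        have h := geom_sum_mul lam (m + 1)
        linear_combination -h
      have hid : E * (1 - lam) = (∑ m ∈ Icc 1 N, ∑ d ∈ m.divisors,
          (μ d : ℝ) * lam ^ (n - m / d + 1)) - lam ^ (n + 1) := by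
        rw [hE, sub_mul]
        have hA : (∑ j ∈ range (n + 1), lam ^ j) * (1 - lam) = 1 - lam ^ (n + 1) := hgm n
        have hB : (∑ k ∈ Icc 1 N, (Mertens (N / k) : ℝ) * ∑ j ∈ range (n - k + 1), lam ^ j)
              * (1 - lam)
            = 1 - ∑ k ∈ Icc 1 N, (Mertens (N / k) : ℝ) * lam ^ (n - k + 1) := by
          rw [Finset.sum_mul]
          have hterm : ∀ k ∈ Icc 1 N,
              ((Mertens (N / k) : ℝ) * ∑ j ∈ range (n - k + 1), lam ^ j) * (1 - lam)
              = (Mertens (N / k) : ℝ) - (Mertens (N / k) : ℝ) * lam ^ (n - k + 1) := by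
            intro k _
            rw [mul_assoc, hgm (n - k)]
            ring
          rw [Finset.sum_congr rfl hterm, Finset.sum_sub_distrib, mertens_sum N hN1]
        rw [hA, hB, hswap (fun k => lam ^ (n - k + 1))]
        ring
      set y := lam⁻¹ with hydef
      have hly : lam * y = 1 := mul_inv_cancel₀ (ne_of_gt hl)
      have hy : 1 < y := by nlinarith
      have hexp : ∀ m ∈ Icc 1 N, ∀ d ∈ m.divisors,
          lam ^ (n - m / d + 1) = lam ^ (n + 1) * y ^ (m / d) := by
        intro m hm d hd
        have hle : m / d ≤ N := hdiv_le hm hd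
        have hadd : n - m / d + 1 + m / d = n + 1 := by omega
        calc lam ^ (n - m / d + 1)
            = lam ^ (n - m / d + 1) * (lam ^ (m / d) * y ^ (m / d)) := by
              rw [← mul_pow, hly, one_pow, mul_one]
          _ = lam ^ (n + 1) * y ^ (m / d) := by rw [← mul_assoc, ← pow_add, hadd]
      have hfac : ∑ m ∈ Icc 1 N, ∑ d ∈ m.divisors, (μ d : ℝ) * lam ^ (n - m / d + 1)
          = lam ^ (n + 1) * ∑ m ∈ Icc 1 N, ∑ d ∈ m.divisors, (μ d : ℝ) * y ^ (m / d) := by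
        rw [Finset.mul_sum]
        refine Finset.sum_congr rfl fun m hm => ?_
        rw [Finset.mul_sum]
        refine Finset.sum_congr rfl fun d hd => ?_
        rw [hexp m hm d hd]
        ring
      have h1term : ∑ d ∈ (1:ℕ).divisors, (μ d : ℝ) * y ^ ((1:ℕ) / d) = y := by
        simp [Nat.divisors_one]
      have hsum_ge : y ≤ ∑ m ∈ Icc 1 N, ∑ d ∈ m.divisors, (μ d : ℝ) * y ^ (m / d) := by
        calc y = ∑ d ∈ (1:ℕ).divisors, (μ d : ℝ) * y ^ ((1:ℕ) / d) := h1term.symm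
          _ ≤ _ := Finset.single_le_sum
              (f := fun m => ∑ d ∈ m.divisors, (μ d : ℝ) * y ^ (m / d))
              (fun m hm => A_nonneg m (mem_Icc.1 hm).1 y (le_of_lt hy))
              (mem_Icc.2 ⟨le_refl 1, hN1⟩)
      have hEpos : 0 < E * (1 - lam) := by
        rw [hid, hfac]
        have hp : (0:ℝ) < lam ^ (n + 1) := pow_pos hl _
        nlinarith
      by_contra hcon
      push_neg at hcon
      nlinarith
  constructor
  · rcases eq_or_lt_of_le h0 with h | h
    · exact ge_of_eq (hzero h.symm)
    · exact le_of_lt (hpos h)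
  · constructor
    · intro hEz
      by_contra hlz
      exact absurd hEz (ne_of_gt (hpos (h0.lt_of_ne (Ne.symm hlz))))
    · exact hzero
end

section
/- For every integer n ≥ 2 and every real λ ∈ [0,1], the inequality ∑_{j=0}^{n} λ^j − ∑_{k=1}^{n−1} M(⌊(n−1)/k⌋)·(∑_{j=0}^{n−k} λ^j) ≥ λ^n holds. -/
open Finset Real

open ArithmeticFunction

noncomputable def FF (P : Finset ℕ) (s : ℕ) (x m : ℝ) : ℝ :=
  ∑ T ∈ P.powerset, (-1:ℝ)^T.card * ((∏ p ∈ T, (p:ℝ))⁻¹)^s * x ^ (m / ∏ p ∈ T, (p:ℝ))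

lemma FF_insert (a : ℕ) (Q : Finset ℕ) (ha : a ∉ Q) (ha0 : 0 < a) (s : ℕ) (x m : ℝ) :
    FF (insert a Q) s x m = FF Q s x m - ((a:ℝ)⁻¹)^s * FF Q s x (m / a) := by
  classical
  unfold FF
  rw [Finset.sum_powerset_insert ha]
  have hterm : ∀ T ∈ Q.powerset,
      (-1:ℝ)^(insert a T).card * ((∏ p ∈ insert a T, (p:ℝ))⁻¹)^s
        * x ^ (m / ∏ p ∈ insert a T, (p:ℝ))
      = -(((a:ℝ)⁻¹)^s * ((-1:ℝ)^T.card * ((∏ p ∈ T, (p:ℝ))⁻¹)^s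
          * x ^ ((m / a) / ∏ p ∈ T, (p:ℝ)))) := by
    intro T hT
    rw [Finset.mem_powerset] at hT
    have haT : a ∉ T := fun h => ha (hT h)
    rw [Finset.prod_insert haT, Finset.card_insert_of_notMem haT, div_div, pow_succ,
      mul_inv, mul_pow]
    ring
  rw [Finset.sum_congr rfl hterm, Finset.sum_neg_distrib, ← Finset.mul_sum]
  ring

lemma FF_hasDeriv (P : Finset ℕ) (hP : ∀ p ∈ P, 1 ≤ p) (s : ℕ) (x : ℝ) (hx : 0 < x) (m : ℝ) :
    HasDerivAt (fun m => FF P s x m) (Real.log x * FF P (s+1) x m) m := by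
  unfold FF
  rw [Finset.mul_sum]
  apply HasDerivAt.fun_sum
  intro T hT
  have hb : (0:ℝ) < ∏ p ∈ T, (p:ℝ) := by
    apply Finset.prod_pos
    intro p hp
    have h1 : 1 ≤ p := hP p (Finset.mem_powerset.mp hT hp)
    exact_mod_cast Nat.lt_of_lt_of_le Nat.zero_lt_one h1
  set b := ∏ p ∈ T, (p:ℝ) with hbdef
  have h1 : ∀ y : ℝ, x ^ (y / b) = Real.exp (Real.log x / b * y) := by
    intro y
    rw [Real.rpow_def_of_pos hx]
    congr 1
    ring
  have key : HasDerivAt (fun y : ℝ => x ^ (y / b)) (Real.log x / b * x ^ (m / b)) m := by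
    simp only [h1]
    have h2 := ((hasDerivAt_id m).const_mul (Real.log x / b)).exp
    convert h2 using 1
    simp only [id_eq]
    simp only [id]
    ring
  have h3 := key.const_mul ((-1:ℝ)^T.card * (b⁻¹)^s)
  convert h3 using 1
  · rfl
  rw [pow_succ]
  field_simp

lemma FF_mono (Q : Finset ℕ) (hQ : ∀ p ∈ Q, 1 ≤ p) (x : ℝ) (hx : 1 ≤ x) (s : ℕ)
    (h : ∀ m : ℝ, 0 ≤ m → 0 ≤ FF Q (s+1) x m) :
    MonotoneOn (fun m => FF Q s x m) (Set.Ici 0) := by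
  have hx0 : (0:ℝ) < x := lt_of_lt_of_le zero_lt_one hx
  apply monotoneOn_of_deriv_nonneg (convex_Ici 0)
  · exact fun m _ => (FF_hasDeriv Q hQ s x hx0 m).continuousAt.continuousWithinAt
  · exact fun m _ => (FF_hasDeriv Q hQ s x hx0 m).differentiableAt.differentiableWithinAt
  · intro m hm
    rw [interior_Ici] at hm
    rw [(FF_hasDeriv Q hQ s x hx0 m).deriv]
    exact mul_nonneg (Real.log_nonneg hx) (h m (le_of_lt hm))

lemma FF_nonneg (x : ℝ) (hx : 1 ≤ x) :
    ∀ P : Finset ℕ, (∀ p ∈ P, 1 ≤ p) → ∀ s : ℕ, ∀ m : ℝ, 0 ≤ m → 0 ≤ FF P s x m := by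
  intro P
  induction P using Finset.induction_on with
  | empty =>
    intro _ s m hm
    unfold FF
    simp only [Finset.powerset_empty, Finset.sum_singleton, Finset.card_empty, pow_zero,
      Finset.prod_empty, inv_one, one_pow, one_mul, div_one]
    positivity
  | @insert a Q ha ih =>
    intro hP s m hm
    have hQ : ∀ p ∈ Q, 1 ≤ p := fun p hp => hP p (Finset.mem_insert_of_mem hp)
    have ha1 : 1 ≤ a := hP a (Finset.mem_insert_self a Q)
    have ha1R : (1:ℝ) ≤ (a:ℝ) := by exact_mod_cast ha1
    have ha0R : (0:ℝ) < (a:ℝ) := lt_of_lt_of_le zero_lt_one ha1R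
    rw [FF_insert a Q ha (by omega)]
    have hma : 0 ≤ m / a := div_nonneg hm (le_of_lt ha0R)
    have hmono := FF_mono Q hQ x hx s (fun m' hm' => ih hQ (s+1) m' hm')
    have h1 : FF Q s x (m / a) ≤ FF Q s x m :=
      hmono hma hm (div_le_self hm ha1R)
    have h2 : 0 ≤ FF Q s x (m / a) := ih hQ s (m / a) hma
    have h3 : ((a:ℝ)⁻¹)^s ≤ 1 := pow_le_one₀ (by positivity) (inv_le_one_of_one_le₀ ha1R)
    nlinarith

lemma moebius_powerset (m : ℕ) (hm : m ≠ 0) (f : ℕ → ℝ) :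
    ∑ d ∈ m.divisors, (moebius d : ℝ) * f d
      = ∑ T ∈ m.primeFactors.powerset, (-1:ℝ)^T.card * f (∏ p ∈ T, p) := by
  classical
  have hfilter : ∑ d ∈ m.divisors.filter Squarefree, (moebius d : ℝ) * f d
      = ∑ d ∈ m.divisors, (moebius d : ℝ) * f d := by
    apply Finset.sum_filter_of_ne
    intro d _ hne
    by_contra hsq
    rw [moebius_eq_zero_of_not_squarefree hsq] at hne
    simp at hne
  rw [← hfilter, Nat.sum_divisors_filter_squarefree hm]
  have hPF : (UniqueFactorizationMonoid.normalizedFactors m).toFinset = m.primeFactors := by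
    rw [Nat.factors_eq]
    simp [Nat.toFinset_factors]
  rw [hPF]
  apply Finset.sum_congr rfl
  intro T hT
  have hTp : ∀ p ∈ T, Nat.Prime p :=
    fun p hp => Nat.prime_of_mem_primeFactors (Finset.mem_powerset.mp hT hp)
  have hprod : T.val.prod = ∏ p ∈ T, p := by
    rw [Finset.prod_eq_multiset_prod]
    simp
  rw [hprod]
  have hmu : (moebius (∏ p ∈ T, p) : ℤ) = (-1)^T.card := by
    rw [IsMultiplicative.map_prod _ isMultiplicative_moebius T ?_]
    · rw [Finset.prod_congr rfl (fun p hp => moebius_apply_prime (hTp p hp)),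
        Finset.prod_const]
    · intro p hp q hq hne
      exact (Nat.coprime_primes (hTp p hp) (hTp q hq)).mpr hne
  rw [hmu]
  push_cast
  ring

lemma sum_moebius_divisors (m : ℕ) :
    ∑ d ∈ m.divisors, (moebius d) = if m = 1 then 1 else 0 := by
  have h := coe_mul_zeta_apply (f := moebius) (x := m)
  rw [moebius_mul_coe_zeta] at h
  rw [← h, one_apply]

lemma necklace (m : ℕ) (hm : m ≠ 0) (lam : ℝ) (h0 : 0 ≤ lam) (h1 : lam ≤ 1) :
    0 ≤ ∑ d ∈ m.divisors, (moebius d : ℝ) * lam ^ (m - m / d) := by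
  rcases eq_or_lt_of_le h0 with h | h
  · -- lam = 0
    rw [Finset.sum_eq_single 1]
    · simp
    · intro d hd hd1
      have hd2 : 2 ≤ d := by
        have := (Nat.mem_divisors.mp hd).1
        have : 1 ≤ d := Nat.pos_of_mem_divisors hd
        omega
      have hlt : m / d < m := Nat.div_lt_self (Nat.pos_of_ne_zero hm) (by omega)
      rw [← h, zero_pow (by omega)]
      ring
    · intro h1'
      exact absurd (Nat.one_mem_divisors.mpr hm) h1'
  · -- 0 < lam
    have hlam0 : lam ≠ 0 := ne_of_gt h
    have key : ∀ d ∈ m.divisors, (moebius d : ℝ) * lam ^ (m - m / d)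
        = lam ^ m * ((moebius d : ℝ) * (lam⁻¹) ^ (m / d)) := by
      intro d hd
      have hle : m / d ≤ m := Nat.div_le_self m d
      rw [pow_sub₀ lam hlam0 hle, inv_pow]
      field_simp
    rw [Finset.sum_congr rfl key, ← Finset.mul_sum]
    apply mul_nonneg (pow_nonneg h0 m)
    set x := lam⁻¹ with hxdef
    have hx : 1 ≤ x := by
      rw [hxdef]
      nlinarith [mul_inv_cancel₀ hlam0, mul_nonneg (inv_nonneg.mpr h.le) (sub_nonneg.mpr h1)]
    rw [moebius_powerset m hm (fun d => x ^ (m / d))]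
    have hnn := FF_nonneg x hx m.primeFactors
      (fun p hp => (Nat.prime_of_mem_primeFactors hp).one_lt.le) 0 (m:ℝ) (Nat.cast_nonneg m)
    unfold FF at hnn
    refine le_of_le_of_eq hnn (Finset.sum_congr rfl ?_)
    intro T hT
    have hTp : ∀ p ∈ T, Nat.Prime p :=
      fun p hp => Nat.prime_of_mem_primeFactors (Finset.mem_powerset.mp hT hp)
    have hdvd : (∏ p ∈ T, p) ∣ m := Finset.prod_primes_dvd m
      (fun p hp => (hTp p hp).prime) (fun p hp =>
        Nat.dvd_of_mem_primeFactors (Finset.mem_powerset.mp hT hp))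
    have hd0 : (∏ p ∈ T, p) ≠ 0 := by
      apply Finset.prod_ne_zero_iff.mpr
      intro p hp
      exact (hTp p hp).pos.ne'
    have hcast : (∏ p ∈ T, (p:ℝ)) = ((∏ p ∈ T, p : ℕ) : ℝ) := by push_cast; rfl
    rw [hcast, pow_zero, mul_one, ← Nat.cast_div hdvd (by exact_mod_cast hd0),
      Real.rpow_natCast]

lemma Wle (m : ℕ) (hm2 : 2 ≤ m) (lam : ℝ) (h0 : 0 ≤ lam) (h1 : lam ≤ 1) :
    ∑ d ∈ m.divisors, (moebius d : ℝ) * (∑ i ∈ range (m - m / d), lam ^ i) ≤ 0 := by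
  have hm0 : m ≠ 0 := by omega
  have hm1 : m ≠ 1 := by omega
  have hsum0 : ∑ d ∈ m.divisors, (moebius d : ℝ) = 0 := by
    have := sum_moebius_divisors m
    rw [if_neg hm1] at this
    exact_mod_cast congrArg (Int.cast : ℤ → ℝ) this
  rcases eq_or_lt_of_le h1 with heq | hlt
  · -- lam = 1
    subst heq
    simp only [one_pow, Finset.sum_const, Finset.card_range, nsmul_eq_mul, mul_one]
    have hcast : ∀ d ∈ m.divisors, (moebius d : ℝ) * ((m - m / d : ℕ) : ℝ)
        = (moebius d : ℝ) * (m : ℝ) - (moebius d : ℝ) * ((m / d : ℕ) : ℝ) := by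
      intro d hd
      rw [Nat.cast_sub (Nat.div_le_self m d)]
      ring
    rw [Finset.sum_congr rfl hcast, Finset.sum_sub_distrib, ← Finset.sum_mul, hsum0, zero_mul]
    rw [moebius_powerset m hm0 (fun d => ((m / d : ℕ) : ℝ))]
    have hterm : ∀ T ∈ m.primeFactors.powerset,
        (-1:ℝ)^T.card * ((m / ∏ p ∈ T, p : ℕ) : ℝ)
          = (m : ℝ) * ∏ p ∈ T, (-((p:ℝ)⁻¹)) := by
      intro T hT
      have hTp : ∀ p ∈ T, Nat.Prime p :=
        fun p hp => Nat.prime_of_mem_primeFactors (Finset.mem_powerset.mp hT hp)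
      have hdvd : (∏ p ∈ T, p) ∣ m := Finset.prod_primes_dvd m
        (fun p hp => (hTp p hp).prime) (fun p hp =>
          Nat.dvd_of_mem_primeFactors (Finset.mem_powerset.mp hT hp))
      have hd0 : ((∏ p ∈ T, p : ℕ) : ℝ) ≠ 0 := by
        push_cast
        apply Finset.prod_ne_zero_iff.mpr
        intro p hp
        exact_mod_cast (hTp p hp).pos.ne'
      have hneg : ∏ p ∈ T, (-((p:ℝ)⁻¹)) = (-1:ℝ)^T.card * (∏ p ∈ T, (p:ℝ))⁻¹ := by
        calc ∏ p ∈ T, (-((p:ℝ)⁻¹)) = ∏ p ∈ T, ((-1) * (p:ℝ)⁻¹) := by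
              apply Finset.prod_congr rfl; intro p _; ring
          _ = (-1:ℝ)^T.card * ∏ p ∈ T, (p:ℝ)⁻¹ := by
              rw [Finset.prod_mul_distrib, Finset.prod_const]
          _ = (-1:ℝ)^T.card * (∏ p ∈ T, (p:ℝ))⁻¹ := by
              rw [Finset.prod_inv_distrib]
      rw [Nat.cast_div hdvd hd0, hneg]
      push_cast
      ring
    rw [Finset.sum_congr rfl hterm, ← Finset.mul_sum]
    have hpa := Finset.prod_add (fun p : ℕ => -((p:ℝ)⁻¹)) (fun _ => (1:ℝ)) m.primeFactors
    simp only [Finset.prod_const_one, mul_one] at hpa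
    rw [← hpa]
    have hprod : 0 ≤ ∏ p ∈ m.primeFactors, (-((p:ℝ)⁻¹) + 1) := by
      apply Finset.prod_nonneg
      intro p hp
      have hp1 : 1 ≤ p := (Nat.prime_of_mem_primeFactors hp).one_lt.le
      have : ((p:ℝ))⁻¹ ≤ 1 := inv_le_one_of_one_le₀ (by exact_mod_cast hp1)
      linarith
    have hmge : (0:ℝ) ≤ (m:ℝ) := Nat.cast_nonneg m
    nlinarith
  · -- lam < 1
    have hgeom : ∀ t : ℕ, (1 - lam) * (∑ i ∈ range t, lam ^ i) = 1 - lam ^ t := by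
      intro t
      have := geom_sum_mul lam t
      nlinarith [this]
    have hkey : (1 - lam) * (∑ d ∈ m.divisors, (moebius d : ℝ) * (∑ i ∈ range (m - m / d), lam ^ i))
        = ∑ d ∈ m.divisors, (moebius d : ℝ)
          - ∑ d ∈ m.divisors, (moebius d : ℝ) * lam ^ (m - m / d) := by
      rw [Finset.mul_sum, ← Finset.sum_sub_distrib]
      apply Finset.sum_congr rfl
      intro d hd
      rw [show (1 - lam) * ((moebius d : ℝ) * ∑ i ∈ range (m - m / d), lam ^ i)
          = (moebius d : ℝ) * ((1 - lam) * ∑ i ∈ range (m - m / d), lam ^ i) from by ring,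
        hgeom (m - m / d)]
      ring
    rw [hsum0, zero_sub] at hkey
    have hneck := necklace m hm0 lam h0 h1
    nlinarith [hkey, hneck, hlt]

lemma hyperbola (N : ℕ) (F : ℕ → ℕ → ℝ) :
    ∑ k ∈ Icc 1 N, ∑ d ∈ Icc 1 (N / k), F k d
      = ∑ m ∈ Icc 1 N, ∑ d ∈ m.divisors, F (m / d) d := by
  rw [Finset.sum_sigma', Finset.sum_sigma']
  apply Finset.sum_nbij' (i := fun p => (⟨p.1 * p.2, p.2⟩ : Σ _ : ℕ, ℕ))
    (j := fun p => (⟨p.1 / p.2, p.2⟩ : Σ _ : ℕ, ℕ))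
  · rintro ⟨k, d⟩ h
    simp only [Finset.mem_sigma, Finset.mem_Icc, Nat.mem_divisors] at *
    obtain ⟨⟨hk1, hkN⟩, hd1, hdN⟩ := h
    have hkd : d * k ≤ N := (Nat.le_div_iff_mul_le (by omega)).mp hdN
    have hcomm : k * d = d * k := Nat.mul_comm k d
    have hpos : 0 < k * d := Nat.mul_pos (by omega) (by omega)
    exact ⟨⟨by omega, by omega⟩, ⟨k, by ring⟩, by omega⟩
  · rintro ⟨m, d⟩ h
    simp only [Finset.mem_sigma, Finset.mem_Icc, Nat.mem_divisors] at *
    obtain ⟨⟨hm1, hmN⟩, hdvd, hm0⟩ := h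
    have hd0 : 0 < d := Nat.pos_of_dvd_of_pos hdvd (by omega)
    have hmd : 0 < m / d := Nat.div_pos (Nat.le_of_dvd (by omega) hdvd) hd0
    refine ⟨⟨by omega, le_trans (Nat.div_le_self m d) hmN⟩, by omega, ?_⟩
    rw [Nat.le_div_iff_mul_le hmd]
    calc d * (m / d) = m := Nat.mul_div_cancel' hdvd
      _ ≤ N := hmN
  · rintro ⟨k, d⟩ h
    simp only [Finset.mem_sigma, Finset.mem_Icc] at h
    have : k * d / d = k := Nat.mul_div_cancel k (by omega)
    simp [this]
  · rintro ⟨m, d⟩ h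
    simp only [Finset.mem_sigma, Nat.mem_divisors] at h
    have : m / d * d = m := Nat.div_mul_cancel h.2.1
    simp [this]
  · rintro ⟨k, d⟩ h
    simp only [Finset.mem_sigma, Finset.mem_Icc] at h
    have : k * d / d = k := Nat.mul_div_cancel k (by omega)
    simp [this]

theorem stmt3 (n : ℕ) (hn : 2 ≤ n) (lam : ℝ) (h0 : 0 ≤ lam) (h1 : lam ≤ 1) :
    ∑ j ∈ range (n + 1), lam ^ j
      - ∑ k ∈ Icc 1 (n - 1), (Mertens ((n - 1) / k) : ℝ) * ∑ j ∈ range (n - k + 1), lam ^ j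
      ≥ lam ^ n := by
  set N := n - 1 with hNdef
  have hN1 : 1 ≤ N := by omega
  have hnN : n = N + 1 := by omega
  set u : ℕ → ℝ := fun t => ∑ j ∈ range t, lam ^ j with hu
  rw [ge_iff_le, Finset.sum_range_succ]
  have hT : ∑ k ∈ Icc 1 N, (Mertens (N / k) : ℝ) * ∑ j ∈ range (n - k + 1), lam ^ j ≤ u n := by
    have step1 : ∀ k, (Mertens (N / k) : ℝ) * ∑ j ∈ range (n - k + 1), lam ^ j
        = ∑ d ∈ Icc 1 (N / k), (moebius d : ℝ) * u (n - k + 1) := by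
      intro k
      rw [Mertens]
      push_cast
      rw [Finset.sum_mul]
    rw [Finset.sum_congr rfl (fun k _ => step1 k),
      hyperbola N (fun k d => (moebius d : ℝ) * u (n - k + 1))]
    have step2 : ∀ m ∈ Icc 1 N,
        ∑ d ∈ m.divisors, (moebius d : ℝ) * u (n - m / d + 1)
          ≤ if m = 1 then u n else 0 := by
      intro m hm
      rw [Finset.mem_Icc] at hm
      obtain ⟨hm1, hmN⟩ := hm
      rcases eq_or_lt_of_le hm1 with heq | hlt
      · rw [if_pos heq.symm, ← heq]
        rw [show (1:ℕ).divisors = {1} from Nat.divisors_one]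
        simp only [Finset.sum_singleton, Nat.div_one, moebius_apply_one]
        rw [show n - 1 + 1 = n from by omega]
        push_cast
        simp
      · have hm2 : 2 ≤ m := hlt
        rw [if_neg (by omega)]
        have hsplit : ∀ d ∈ m.divisors, u (n - m / d + 1)
            = u (n - m + 1) + lam ^ (n - m + 1) * u (m - m / d) := by
          intro d hd
          have hdm : m / d ≤ m := Nat.div_le_self m d
          have harith : (n - m + 1) + (m - m / d) = n - m / d + 1 := by omega
          rw [← harith, hu]
          simp only
          rw [Finset.sum_range_add]
          congr 1
          rw [Finset.mul_sum]
          apply Finset.sum_congr rfl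
          intro i _
          rw [pow_add]
        have : ∑ d ∈ m.divisors, (moebius d : ℝ) * u (n - m / d + 1)
            = (∑ d ∈ m.divisors, (moebius d : ℝ)) * u (n - m + 1)
              + lam ^ (n - m + 1) * ∑ d ∈ m.divisors, (moebius d : ℝ) * u (m - m / d) := by
          rw [Finset.sum_mul, Finset.mul_sum, ← Finset.sum_add_distrib]
          apply Finset.sum_congr rfl
          intro d hd
          rw [hsplit d hd]
          ring
        rw [this]
        have hsum0 : ∑ d ∈ m.divisors, (moebius d : ℝ) = 0 := by
          have := sum_moebius_divisors m
          rw [if_neg (by omega)] at this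
          exact_mod_cast congrArg (Int.cast : ℤ → ℝ) this
        rw [hsum0, zero_mul, zero_add]
        have hW := Wle m hm2 lam h0 h1
        have hpow : (0:ℝ) ≤ lam ^ (n - m + 1) := pow_nonneg h0 _
        exact mul_nonpos_of_nonneg_of_nonpos hpow hW
    calc ∑ m ∈ Icc 1 N, ∑ d ∈ m.divisors, (moebius d : ℝ) * u (n - m / d + 1)
        ≤ ∑ m ∈ Icc 1 N, (if m = 1 then u n else 0) := Finset.sum_le_sum step2
      _ = u n := by
          rw [Finset.sum_ite_eq' (Icc 1 N) 1 (fun _ => u n)]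
          rw [if_pos (by rw [Finset.mem_Icc]; omega)]
  have hun : ∑ j ∈ range n, lam ^ j = u n := rfl
  linarith
end

section
/- Let n ≥ 4 be an integer. For all j with n − ⌊(n−1)/2⌋ + 1 ≤ j ≤ n − ⌊(n−1)/3⌋, the coefficient d_j = ∑_{r=n−j+1}^{n−1} M(⌊(n−1)/r⌋) satisfies d_j = n − 1 − ⌊(n−1)/2⌋ ≥ (n−1)/2. -/
open Finset Real

lemma mertens_one : Mertens 1 = 1 := by
  simp [Mertens]

lemma mertens_two : Mertens 2 = 0 := by
  have h : Finset.Icc 1 2 = ({1, 2} : Finset ℕ) := rfl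
  simp [Mertens, h, ArithmeticFunction.moebius_apply_prime (p := 2) Nat.prime_two]

theorem stmt11 (n : ℕ) (hn : 4 ≤ n) (j : ℕ)
    (hj1 : n - (n - 1) / 2 + 1 ≤ j) (hj2 : j ≤ n - (n - 1) / 3) :
    ∑ r ∈ Icc (n - j + 1) (n - 1), Mertens ((n - 1) / r) = (n : ℤ) - 1 - ((n - 1) / 2 : ℕ)
    ∧ ((n : ℝ) - 1 - ((n - 1) / 2 : ℕ) ≥ ((n : ℝ) - 1) / 2) := by
  set m := n - 1 with hm
  have h2 : m / 2 ≤ m := Nat.div_le_self _ _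
  have hnj : n - j ≤ m / 2 := by omega
  have h32 : m / 3 ≤ n - j := by omega
  constructor
  · rw [Finset.Icc_add_one_left_eq_Ioc, ← Finset.sum_Ioc_consecutive _ hnj h2]
    have hA : ∑ r ∈ Finset.Ioc (n - j) (m / 2), Mertens (m / r) = 0 := by
      apply Finset.sum_eq_zero
      intro r hr
      simp only [Finset.mem_Ioc] at hr
      have : m / r = 2 := Nat.div_eq_of_lt_le (by omega) (by omega)
      rw [this, mertens_two]
    have hB : ∑ r ∈ Finset.Ioc (m / 2) m, Mertens (m / r) = (m : ℤ) - (m / 2 : ℕ) := by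
      have key : ∀ r ∈ Finset.Ioc (m / 2) m, Mertens (m / r) = 1 := by
        intro r hr
        simp only [Finset.mem_Ioc] at hr
        have : m / r = 1 := Nat.div_eq_of_lt_le (by omega) (by omega)
        rw [this, mertens_one]
      rw [Finset.sum_congr rfl key, Finset.sum_const, Nat.card_Ioc]
      simp [Nat.cast_sub h2]
    rw [hA, hB]
    have : (m : ℤ) = (n : ℤ) - 1 := by omega
    omega
  · have h1 : ((m / 2 : ℕ) : ℝ) ≤ (m : ℝ) / 2 := by
      rw [le_div_iff₀ (by norm_num)]
      exact_mod_cast Nat.div_mul_le_self m 2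
    have h2' : (m : ℝ) = (n : ℝ) - 1 := by
      have : (m : ℤ) = (n : ℤ) - 1 := by omega
      exact_mod_cast this
    linarith
end

section
/- For every integer m ≥ 1, ∑_{a=1}^{m} φ(a) ≥ 3m²/π² − (1/2)·m·log m − m, where φ is Euler's totient function. -/
open Finset Real ArithmeticFunction
open scoped ArithmeticFunction.Moebius

noncomputable def fmu : ℕ → ℝ := fun n => (μ n : ℝ) / (n : ℝ) ^ 2

lemma fmu_zero : fmu 0 = 0 := by simp [fmu]

lemma abs_fmu_le (n : ℕ) : |fmu n| ≤ ((n : ℝ) ^ 2)⁻¹ := by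
  rcases eq_or_ne n 0 with rfl | hn
  · simp [fmu]
  · have h1 : |(μ n : ℝ)| ≤ 1 := by
      have := abs_moebius_le_one (n := n)
      calc |(μ n : ℝ)| = ((|μ n| : ℤ) : ℝ) := by push_cast; rfl
        _ ≤ 1 := by exact_mod_cast this
    have hn2 : (0:ℝ) < (n:ℝ)^2 := by positivity
    rw [fmu, abs_div, abs_of_nonneg hn2.le, div_le_iff₀ hn2, inv_mul_cancel₀ hn2.ne']
    exact h1

lemma summable_fmu : Summable fmu := by
  refine Summable.of_abs (Summable.of_nonneg_of_le (fun n => abs_nonneg _) abs_fmu_le ?_)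
  simpa using Real.summable_one_div_nat_pow.mpr one_lt_two

lemma hasSum_fmu : HasSum fmu (6 / π ^ 2) := by
  have hs : (1:ℝ) < (2:ℂ).re := by norm_num
  have hmul := LSeries_zeta_mul_Lseries_moebius hs
  rw [LSeries_zeta_eq_riemannZeta hs, riemannZeta_two] at hmul
  have hπ : (π : ℂ) ^ 2 ≠ 0 := by
    simpa using Real.pi_ne_zero
  have hμL : LSeries (fun n => ((μ n : ℤ) : ℂ)) 2 = 6 / (π : ℂ) ^ 2 := by
    field_simp at hmul ⊢
    linear_combination hmul
  have hterm : ∀ n, LSeries.term (fun n => ((μ n : ℤ) : ℂ)) 2 n = ((fmu n : ℝ) : ℂ) := by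
    intro n
    rcases eq_or_ne n 0 with rfl | hn
    · simp [fmu_zero]
    · rw [LSeries.term_of_ne_zero hn, fmu]
      have : (n : ℂ) ^ (2 : ℂ) = ((n : ℂ)) ^ (2 : ℕ) := by
        rw [show (2 : ℂ) = ((2 : ℕ) : ℂ) by norm_num, Complex.cpow_natCast]
      rw [this]
      push_cast
      ring
  have htsum : ((∑' n, fmu n : ℝ) : ℂ) = 6 / (π : ℂ) ^ 2 := by
    rw [Complex.ofReal_tsum]
    rw [← hμL, LSeries]
    exact tsum_congr fun n => (hterm n).symm
  have : (∑' n, fmu n : ℝ) = 6 / π ^ 2 := by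
    apply Complex.ofReal_injective
    rw [htsum]
    push_cast
    ring
  exact this ▸ summable_fmu.hasSum

lemma sum_fmu_ge (m : ℕ) (hm : 1 ≤ m) :
    6 / π ^ 2 - 1 / m ≤ ∑ d ∈ Icc 1 m, fmu d := by
  have htend := hasSum_fmu.tendsto_sum_nat
  have hkey : 6 / π ^ 2 ≤ (∑ d ∈ Icc 1 m, fmu d) + 1 / m := by
    refine le_of_tendsto htend ?_
    filter_upwards [Filter.eventually_ge_atTop (m + 1)] with N hN
    have h0N : 0 < N := by omega
    have hsplit : ∑ n ∈ range N, fmu n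
        = (∑ d ∈ Icc 1 m, fmu d) + ∑ n ∈ Ioo m N, fmu n := by
      rw [← Nat.Ico_zero_eq_range, Finset.sum_eq_sum_Ico_succ_bot h0N, fmu_zero, zero_add,
        ← Finset.sum_Ico_consecutive _ (by omega : 1 ≤ m + 1) (by omega : m + 1 ≤ N),
        Finset.Ico_add_one_right_eq_Icc, Finset.Ico_add_one_left_eq_Ioo]
    rw [hsplit]
    have htail : ∑ n ∈ Ioo m N, fmu n ≤ 1 / m := by
      calc ∑ n ∈ Ioo m N, fmu n ≤ ∑ n ∈ Ioo m N, ((n : ℝ) ^ 2)⁻¹ :=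
            Finset.sum_le_sum fun n _ => (le_abs_self _).trans (abs_fmu_le n)
        _ ≤ ∑ n ∈ Ioc m N, ((n : ℝ) ^ 2)⁻¹ := by
            refine Finset.sum_le_sum_of_subset_of_nonneg ?_ (fun n _ _ => by positivity)
            intro x hx
            simp only [mem_Ioo, mem_Ioc] at hx ⊢
            omega
        _ ≤ (m : ℝ)⁻¹ - (N : ℝ)⁻¹ := sum_Ioc_inv_sq_le_sub (by omega) (by omega)
        _ ≤ 1 / m := by
            rw [one_div]
            have : (0:ℝ) ≤ (N : ℝ)⁻¹ := by positivity
            linarith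
    linarith
  linarith

lemma gauss_sum (k : ℕ) : ∑ q ∈ Icc 1 k, (q : ℝ) = k * (k + 1) / 2 := by
  induction k with
  | zero => simp
  | succ k ih =>
      rw [Finset.sum_Icc_succ_top (by omega : 1 ≤ k + 1), ih]
      push_cast
      ring

lemma totient_swap (m : ℕ) :
    ∑ a ∈ Icc 1 m, (Nat.totient a : ℝ)
      = ∑ d ∈ Icc 1 m, ∑ q ∈ Icc 1 (m / d), (μ d : ℝ) * (q : ℝ) := by
  have hphi : ∀ a > 0, (∑ x ∈ a.divisorsAntidiagonal, (μ x.1 : ℝ) * (x.2 : ℝ))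
      = (Nat.totient a : ℝ) := by
    refine (sum_eq_iff_sum_mul_moebius_eq (R := ℝ)
      (f := fun n => (Nat.totient n : ℝ)) (g := fun n => (n : ℝ))).mp ?_
    intro n _
    exact_mod_cast congrArg (fun t : ℕ => (t : ℝ)) (Nat.sum_totient n)
  rw [Finset.sum_congr rfl (fun a ha => (hphi a (by
    simp only [mem_Icc] at ha; omega)).symm)]
  rw [Finset.sum_sigma', Finset.sum_sigma']
  refine Finset.sum_nbij' (fun x => ⟨x.2.1, x.2.2⟩) (fun y => ⟨y.1 * y.2, (y.1, y.2)⟩)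
    ?_ ?_ ?_ ?_ ?_
  · rintro ⟨a, d, q⟩ h
    simp only [Finset.mem_sigma, mem_Icc, Nat.mem_divisorsAntidiagonal] at h ⊢
    obtain ⟨⟨h1, h2⟩, h3, h4⟩ := h
    subst h3
    have hd0 : d ≠ 0 := fun h => by simp [h] at h4
    have hq0 : q ≠ 0 := fun h => by simp [h] at h4
    refine ⟨⟨Nat.one_le_iff_ne_zero.mpr hd0, ?_⟩, Nat.one_le_iff_ne_zero.mpr hq0, ?_⟩
    · calc d ≤ d * q := Nat.le_mul_of_pos_right d (Nat.pos_of_ne_zero hq0)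
        _ ≤ m := h2
    · exact (Nat.le_div_iff_mul_le (Nat.pos_of_ne_zero hd0)).mpr
        (by rw [Nat.mul_comm]; exact h2)
  · rintro ⟨d, q⟩ h
    simp only [Finset.mem_sigma, mem_Icc, Nat.mem_divisorsAntidiagonal] at h ⊢
    obtain ⟨⟨h1, h2⟩, h3, h4⟩ := h
    have hdq : q * d ≤ m := (Nat.le_div_iff_mul_le (by omega)).mp h4
    have hne : d * q ≠ 0 := Nat.mul_ne_zero (by omega) (by omega)
    exact ⟨⟨Nat.one_le_iff_ne_zero.mpr hne, by rw [Nat.mul_comm]; exact hdq⟩, trivial, hne⟩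
  · rintro ⟨a, d, q⟩ h
    simp only [Finset.mem_sigma, mem_Icc, Nat.mem_divisorsAntidiagonal] at h
    obtain ⟨_, h3, _⟩ := h
    simp [h3]
  · rintro ⟨d, q⟩ _
    rfl
  · rintro ⟨a, d, q⟩ _
    rfl

theorem stmt13 (m : ℕ) (hm : 1 ≤ m) :
    (∑ a ∈ Icc 1 m, (Nat.totient a : ℝ))
      ≥ 3 * m ^ 2 / π ^ 2 - (1 / 2) * m * Real.log m - m := by
  have hπ2 : (0:ℝ) < π ^ 2 := by positivity
  have hswap := totient_swap m
  have hterm : ∀ d ∈ Icc 1 m,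
      (m : ℝ) ^ 2 / 2 * fmu d - (m : ℝ) / (2 * d)
        ≤ ∑ q ∈ Icc 1 (m / d), (μ d : ℝ) * (q : ℝ) := by
    intro d hd
    simp only [mem_Icc] at hd
    obtain ⟨hd1, hd2⟩ := hd
    have hd0 : (0:ℝ) < d := by exact_mod_cast hd1
    set k : ℕ := m / d with hk
    set x : ℝ := (m : ℝ) / d with hx
    have hx0 : 0 ≤ x := by positivity
    have hkx : (k : ℝ) ≤ x := by
      rw [hx, le_div_iff₀ hd0]
      exact_mod_cast Nat.div_mul_le_self m d
    have hxk1 : x < (k : ℝ) + 1 := by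
      rw [hx, div_lt_iff₀ hd0]
      have hmlt : m < (k + 1) * d := by
        calc m = d * k + m % d := by rw [hk]; exact (Nat.div_add_mod m d).symm
          _ < d * k + d := Nat.add_lt_add_left (Nat.mod_lt m (by omega)) _
          _ = (k + 1) * d := by ring
      exact_mod_cast hmlt
    have hμ : |(μ d : ℝ)| ≤ 1 := by
      have := abs_moebius_le_one (n := d)
      calc |(μ d : ℝ)| = ((|μ d| : ℤ) : ℝ) := by push_cast; rfl
        _ ≤ 1 := by exact_mod_cast this
    rw [← Finset.mul_sum, gauss_sum]
    have habs := abs_le.mp hμ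
    have hfmu : fmu d = (μ d : ℝ) / d ^ 2 := rfl
    have hx2 : (m : ℝ) ^ 2 / 2 * fmu d = (μ d : ℝ) * x ^ 2 / 2 := by
      rw [hfmu, hx]
      field_simp
    have hxd : (m : ℝ) / (2 * d) = x / 2 := by rw [hx]; ring
    rw [hx2, hxd]
    have hk0 : (0:ℝ) ≤ k := by positivity
    nlinarith [mul_nonneg (sub_nonneg.mpr habs.1) (sub_nonneg.mpr hkx),
      mul_nonneg (sub_nonneg.mpr habs.1) (sub_nonneg.mpr hxk1.le),
      mul_nonneg (sub_nonneg.mpr habs.2) (sub_nonneg.mpr hkx),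
      mul_nonneg (sub_nonneg.mpr habs.2) (sub_nonneg.mpr hxk1.le),
      sq_nonneg (x - k), mul_nonneg hx0 hk0]
  have hsum1 : ∑ d ∈ Icc 1 m, ((m : ℝ) ^ 2 / 2 * fmu d - (m : ℝ) / (2 * d))
      ≤ ∑ a ∈ Icc 1 m, (Nat.totient a : ℝ) := by
    rw [hswap]
    exact Finset.sum_le_sum hterm
  rw [Finset.sum_sub_distrib, ← Finset.mul_sum] at hsum1
  have hfmuge := sum_fmu_ge m hm
  have hharm : ∑ d ∈ Icc 1 m, (m : ℝ) / (2 * d) ≤ (m : ℝ) / 2 * (1 + Real.log m) := by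
    have h1 : ∑ d ∈ Icc 1 m, (m : ℝ) / (2 * d)
        = (m : ℝ) / 2 * ∑ d ∈ Icc 1 m, ((d : ℝ))⁻¹ := by
      rw [Finset.mul_sum]
      refine Finset.sum_congr rfl fun d _ => ?_
      field_simp
    rw [h1]
    have h2 : ∑ d ∈ Icc 1 m, ((d : ℝ))⁻¹ = ((harmonic m : ℚ) : ℝ) := by
      rw [harmonic_eq_sum_Icc]
      push_cast
      rfl
    have h3 := harmonic_le_one_add_log m
    have hm2 : (0:ℝ) ≤ (m : ℝ) / 2 := by positivity
    rw [h2]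
    exact mul_le_mul_of_nonneg_left h3 hm2
  have hmge1 : (1:ℝ) ≤ m := by exact_mod_cast hm
  have hlhs : (m : ℝ) ^ 2 / 2 * (6 / π ^ 2 - 1 / m)
      ≤ (m : ℝ) ^ 2 / 2 * ∑ d ∈ Icc 1 m, fmu d :=
    mul_le_mul_of_nonneg_left hfmuge (by positivity)
  have hexp : (m : ℝ) ^ 2 / 2 * (6 / π ^ 2 - 1 / m)
      = 3 * m ^ 2 / π ^ 2 - m / 2 := by
    field_simp
    ring
  rw [hexp] at hlhs
  have : 3 * (m:ℝ) ^ 2 / π ^ 2 - m / 2 - (m : ℝ) / 2 * (1 + Real.log m)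
      ≤ ∑ a ∈ Icc 1 m, (Nat.totient a : ℝ) := by linarith
  calc 3 * (m:ℝ) ^ 2 / π ^ 2 - (1 / 2) * m * Real.log m - m
      = 3 * (m:ℝ) ^ 2 / π ^ 2 - m / 2 - (m : ℝ) / 2 * (1 + Real.log m) := by ring
    _ ≤ _ := this
end

section
/- Let n ≥ 2 be an integer, m = n − 1, and define d_j = ∑_{r=n−j+1}^{m} M(⌊m/r⌋) for 1 ≤ j ≤ m. Then ∑_{j=1}^{m} d_j ≥ 3m²/π² − (3/2)·m·log m − 2m. -/
open Finset Real

namespace Stmt15Aux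

open ArithmeticFunction
open scoped ArithmeticFunction.Moebius


lemma moebius_hasSum : HasSum (fun d : ℕ => (μ d : ℝ) / (d : ℝ) ^ 2) (6 / π ^ 2) := by
  have h2 : (1 : ℝ) < (2 : ℂ).re := by norm_num
  have hmul := LSeries_zeta_mul_Lseries_moebius h2
  rw [LSeries_zeta_eq_riemannZeta h2, riemannZeta_two] at hmul
  have hsummable : LSeriesSummable (fun n => (μ n : ℂ)) 2 :=
    ArithmeticFunction.LSeriesSummable_moebius_iff.mpr h2
  have hπ : (π : ℂ) ^ 2 ≠ 0 := by simp [Real.pi_ne_zero]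
  have hLmu : LSeries (fun n => (μ n : ℂ)) 2 = 6 / (π : ℂ) ^ 2 := by
    field_simp at hmul ⊢
    linear_combination hmul
  have hs : HasSum (fun n : ℕ => LSeries.term (fun n => (μ n : ℂ)) 2 n) ((6 / (π:ℝ)^2 : ℝ) : ℂ) := by
    have h := hsummable.hasSum
    rw [LSeries] at hLmu
    rw [hLmu] at h
    convert h using 2
    push_cast
    ring
  have heq : ∀ n : ℕ, LSeries.term (fun n => (μ n : ℂ)) 2 n = (((μ n : ℝ) / (n:ℝ)^2 : ℝ) : ℂ) := by
    intro n
    rcases eq_or_ne n 0 with rfl | hn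
    · simp [LSeries.term]
    · rw [LSeries.term_of_ne_zero hn]
      rw [show ((2:ℂ)) = ((2:ℕ):ℂ) by norm_num, Complex.cpow_natCast]
      push_cast
      ring
  rw [funext heq] at hs
  exact Complex.hasSum_ofReal.mp hs

lemma tail_bound (m : ℕ) (hm : 1 ≤ m) :
    ∑' i : ℕ, (1 : ℝ) / ((i : ℝ) + m + 1) ^ 2 ≤ 1 / (m:ℝ) := by
  apply Real.tsum_le_of_sum_range_le
  · intro i; positivity
  · intro N
    have key : ∀ i : ℕ, (1 : ℝ) / ((i : ℝ) + m + 1) ^ 2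
        ≤ 1 / ((i : ℝ) + m) - 1 / ((i : ℝ) + m + 1) := by
      intro i
      have h1 : (0:ℝ) < (i : ℝ) + m := by
        have : (1:ℝ) ≤ (m:ℝ) := by exact_mod_cast hm
        positivity
      have h2 : (0:ℝ) < (i : ℝ) + m + 1 := by linarith
      rw [div_sub_div _ _ (ne_of_gt h1) (ne_of_gt h2)]
      rw [div_le_div_iff₀ (by positivity) (by positivity)]
      ring_nf
      nlinarith
    calc ∑ i ∈ range N, (1 : ℝ) / ((i : ℝ) + m + 1) ^ 2
        ≤ ∑ i ∈ range N, ((1:ℝ) / ((i : ℝ) + m) - 1 / ((i : ℝ) + m + 1)) :=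
          Finset.sum_le_sum fun i _ => key i
      _ = 1 / ((0:ℕ) + (m:ℝ)) - 1 / ((N:ℕ) + (m:ℝ)) := by
          have := Finset.sum_range_sub' (fun i : ℕ => (1:ℝ) / ((i : ℝ) + m)) N
          simp only [Nat.cast_add, Nat.cast_one] at this ⊢
          rw [← this]
          apply Finset.sum_congr rfl
          intro i _; push_cast; ring_nf
      _ ≤ 1 / (m:ℝ) := by
          have h1 : (0:ℝ) < (N : ℝ) + m := by
            have : (1:ℝ) ≤ (m:ℝ) := by exact_mod_cast hm
            positivity
          have : (0:ℝ) ≤ 1 / ((N:ℝ) + m) := by positivity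
          push_cast
          simp only [zero_add]
          linarith

lemma sum_moebius_div_sq_ge (m : ℕ) (hm : 1 ≤ m) :
    (6 / π ^ 2 : ℝ) - 1 / m ≤ ∑ d ∈ Icc 1 m, (μ d : ℝ) / (d : ℝ) ^ 2 := by
  set f : ℕ → ℝ := fun d => (μ d : ℝ) / (d : ℝ) ^ 2 with hf
  have hsum := moebius_hasSum
  have hsummable : Summable f := hsum.summable
  have htot := Summable.sum_add_tsum_nat_add (f := f) (m + 1) hsummable
  rw [hsum.tsum_eq] at htot
  have hrange : ∑ i ∈ range (m + 1), f i = ∑ d ∈ Icc 1 m, f d := by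
    rw [Finset.range_eq_Ico, ← Finset.Ico_add_one_right_eq_Icc]
    rw [Finset.sum_eq_sum_Ico_succ_bot (by omega)]
    simp [hf]
  -- tail
  have hg : Summable (fun i : ℕ => (1:ℝ) / ((i : ℝ) + m + 1) ^ 2) := by
    have h0 : Summable (fun i : ℕ => (1:ℝ) / ((i : ℝ)) ^ 2) :=
      Real.summable_one_div_nat_pow.mpr one_lt_two
    have := (summable_nat_add_iff (m+1)).mpr h0
    apply this.congr
    intro i; push_cast; ring_nf
  have htail : |∑' i : ℕ, f (i + (m + 1))| ≤ 1 / (m:ℝ) := by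
    calc |∑' i : ℕ, f (i + (m + 1))| = ‖∑' i : ℕ, f (i + (m + 1))‖ := (Real.norm_eq_abs _).symm
      _ ≤ ∑' i : ℕ, ‖f (i + (m + 1))‖ := norm_tsum_le_tsum_norm
            ((hsummable.comp_injective (add_left_injective (m+1))).abs)
      _ ≤ ∑' i : ℕ, (1:ℝ) / ((i : ℝ) + m + 1) ^ 2 := by
          apply Summable.tsum_le_tsum _ ((hsummable.comp_injective (add_left_injective (m+1))).abs) hg
          intro i
          have h1 : |(μ (i+(m+1)) : ℝ)| ≤ 1 := by
            exact_mod_cast (abs_moebius_le_one (n := i+(m+1)))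
          have h2 : (((i+(m+1):ℕ)):ℝ)^2 = ((i:ℝ)+m+1)^2 := by push_cast; ring
          simp only [Function.comp_apply, Real.norm_eq_abs, hf, abs_div]
          rw [abs_of_nonneg (by positivity : (0:ℝ) ≤ (((i+(m+1):ℕ)):ℝ)^2), h2]
          gcongr
      _ ≤ 1 / (m:ℝ) := tail_bound m hm
  have := abs_le.mp htail
  linarith [this.1, hrange ▸ htot]
lemma mertens_le (k : ℕ) : Mertens k ≤ (k : ℤ) := by
  calc Mertens k ≤ ∑ i ∈ Icc 1 k, 1 := by
        apply Finset.sum_le_sum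
        intro i _
        exact le_of_abs_le (abs_moebius_le_one (n := i))
    _ = (k : ℤ) := by simp [Nat.card_Icc]

lemma sum_inv_le_log : ∀ m : ℕ, 1 ≤ m → ∑ r ∈ Icc 2 m, (1:ℝ)/(r:ℝ) ≤ Real.log m := by
  intro m
  induction m with
  | zero => omega
  | succ m ih =>
    intro _
    rcases Nat.lt_or_ge m 1 with h | h
    · interval_cases m
      simp
    · have hstep := Finset.sum_Icc_succ_top (by omega : 2 ≤ m + 1) (fun r : ℕ => (1:ℝ)/(r:ℝ))
      rw [hstep]
      have hm0 : (0:ℝ) < (m:ℝ) := by exact_mod_cast h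
      have hm1 : (0:ℝ) < (m:ℝ) + 1 := by linarith
      have hlog : Real.log ((m:ℝ)/((m:ℝ)+1)) ≤ (m:ℝ)/((m:ℝ)+1) - 1 :=
        Real.log_le_sub_one_of_pos (by positivity)
      rw [Real.log_div (ne_of_gt hm0) (ne_of_gt hm1)] at hlog
      have hq : (m:ℝ)/((m:ℝ)+1) - 1 = -(1/((m:ℝ)+1)) := by field_simp; ring
      have : Real.log m + 1/((m:ℝ)+1) ≤ Real.log ((m:ℝ)+1) := by
        rw [hq] at hlog; linarith
      have hcast : ((m+1:ℕ):ℝ) = (m:ℝ)+1 := by push_cast; ring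
      rw [hcast]
      have := ih h
      linarith

lemma swap_helper (m : ℕ) (f g : ℕ → ℤ) :
    ∑ r ∈ Icc 1 m, f r * ∑ i ∈ Icc 1 (m / r), g i
      = ∑ i ∈ Icc 1 m, g i * ∑ r ∈ Icc 1 (m / i), f r := by
  have key : ∀ r ∈ Icc 1 m, ∀ h : ℕ → ℤ,
      ∑ i ∈ Icc 1 (m / r), h i = ∑ i ∈ Icc 1 m, if r * i ≤ m then h i else 0 := by
    intro r hr h
    rw [Finset.mem_Icc] at hr
    have hset : Icc 1 (m / r) = (Icc 1 m).filter (fun i => r * i ≤ m) := by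
      ext i
      simp only [Finset.mem_Icc, Finset.mem_filter]
      constructor
      · rintro ⟨h1, h2⟩
        have h3 : i * r ≤ m := (Nat.le_div_iff_mul_le (by omega)).mp h2
        exact ⟨⟨h1, le_trans h2 (Nat.div_le_self m r)⟩, by rw [Nat.mul_comm]; exact h3⟩
      · rintro ⟨⟨h1, _⟩, h3⟩
        exact ⟨h1, (Nat.le_div_iff_mul_le (by omega)).mpr (by rw [Nat.mul_comm]; exact h3)⟩
    rw [hset, Finset.sum_filter]
  calc ∑ r ∈ Icc 1 m, f r * ∑ i ∈ Icc 1 (m / r), g i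
      = ∑ r ∈ Icc 1 m, ∑ i ∈ Icc 1 m, if r * i ≤ m then f r * g i else 0 := by
        apply Finset.sum_congr rfl
        intro r hr
        rw [Finset.mul_sum, key r hr (fun i => f r * g i)]
    _ = ∑ i ∈ Icc 1 m, ∑ r ∈ Icc 1 m, if r * i ≤ m then f r * g i else 0 :=
        Finset.sum_comm
    _ = ∑ i ∈ Icc 1 m, g i * ∑ r ∈ Icc 1 (m / i), f r := by
        apply Finset.sum_congr rfl
        intro i hi
        rw [Finset.mul_sum, key i hi (fun r => g i * f r)]
        apply Finset.sum_congr rfl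
        intro r _
        rw [Nat.mul_comm i r]
        split_ifs <;> ring


lemma gauss_real (k : ℕ) : ∑ i ∈ Icc 1 k, (i:ℝ) = (k:ℝ)*((k:ℝ)+1)/2 := by
  induction k with
  | zero => simp
  | succ k ih =>
    rw [Finset.sum_Icc_succ_top (by omega), ih]
    push_cast
    ring

lemma term_lb (m d : ℕ) (hm : 1 ≤ m) (hd : 1 ≤ d) :
    (m:ℝ)^2/2 * ((μ d:ℝ)/(d:ℝ)^2) - (if d = 1 then 0 else ((m:ℝ)/(d:ℝ) + 1)/2)
      ≤ (μ d : ℝ) * (∑ i ∈ Icc 1 (m/d), (i:ℝ)) := by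
  have hd0 : (0:ℝ) < (d:ℝ) := by exact_mod_cast hd
  have hm0 : (0:ℝ) < (m:ℝ) := by exact_mod_cast hm
  rcases eq_or_ne d 1 with rfl | hne
  · simp only [if_pos rfl, Nat.div_one, gauss_real, Nat.cast_one, one_pow, div_one,
      ArithmeticFunction.moebius_apply_one, Int.cast_one, one_mul, if_true]
    nlinarith
  · rw [if_neg hne, gauss_real]
    set t : ℕ := m / d with ht
    set c : ℝ := (m:ℝ)/(d:ℝ) with hc
    have h1 : (t:ℝ) ≤ c := Nat.cast_div_le
    have h2 : c < (t:ℝ) + 1 := by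
      rw [hc, div_lt_iff₀ hd0]
      have h3 : m < (m/d + 1) * d := by
        nlinarith [Nat.div_add_mod m d, Nat.mod_lt m (show 0 < d by omega)]
      calc (m:ℝ) < ((m/d + 1) * d : ℕ) := by exact_mod_cast h3
        _ = ((t:ℝ) + 1) * d := by push_cast; ring
    have habs : |(μ d : ℝ)| ≤ 1 := by exact_mod_cast abs_moebius_le_one (n := d)
    have hX : |(t:ℝ)*((t:ℝ)+1)/2 - c^2/2| ≤ (c+1)/2 := by
      have ht0 : (0:ℝ) ≤ (t:ℝ) := Nat.cast_nonneg t
      rw [abs_le]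
      constructor <;> nlinarith
    have key : -( (c+1)/2 ) ≤ (μ d : ℝ) * ((t:ℝ)*((t:ℝ)+1)/2 - c^2/2) := by
      calc -((c+1)/2) ≤ -(|(μ d : ℝ)| * |(t:ℝ)*((t:ℝ)+1)/2 - c^2/2|) := by
            have h4 : |(μ d : ℝ)| * |(t:ℝ)*((t:ℝ)+1)/2 - c^2/2| ≤ 1 * ((c+1)/2) :=
              mul_le_mul habs hX (abs_nonneg _) zero_le_one
            linarith
        _ = -(|(μ d : ℝ) * ((t:ℝ)*((t:ℝ)+1)/2 - c^2/2)|) := by rw [abs_mul]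
        _ ≤ _ := neg_abs_le _
    have heq : (m:ℝ)^2/2 * ((μ d:ℝ)/(d:ℝ)^2) = (μ d : ℝ) * (c^2/2) := by
      rw [hc]; field_simp
    nlinarith [key]

lemma stepA (n : ℕ) (hn : 2 ≤ n) :
    ∑ j ∈ Icc 1 (n-1), ∑ r ∈ Icc (n - j + 1) (n-1), Mertens ((n-1)/r)
      = ∑ r ∈ Icc 1 (n-1), ((r:ℤ) - 1) * Mertens ((n-1)/r) := by
  calc ∑ j ∈ Icc 1 (n-1), ∑ r ∈ Icc (n-j+1) (n-1), Mertens ((n-1)/r)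
      = ∑ j ∈ Icc 1 (n-1), ∑ r ∈ Icc 1 (n-1),
          (if n - j + 1 ≤ r then Mertens ((n-1)/r) else 0) := by
        refine Finset.sum_congr rfl fun j hj => ?_
        rw [mem_Icc] at hj
        have key : Icc (n - j + 1) (n-1) = (Icc 1 (n-1)).filter (fun r => n - j + 1 ≤ r) := by
          ext r; simp only [mem_Icc, mem_filter]; omega
        rw [key, Finset.sum_filter]
    _ = ∑ r ∈ Icc 1 (n-1), ∑ j ∈ Icc 1 (n-1),
          (if n - j + 1 ≤ r then Mertens ((n-1)/r) else 0) := Finset.sum_comm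
    _ = ∑ r ∈ Icc 1 (n-1), ((r:ℤ) - 1) * Mertens ((n-1)/r) := by
        refine Finset.sum_congr rfl fun r hr => ?_
        rw [mem_Icc] at hr
        rw [← Finset.sum_filter]
        have hset : (Icc 1 (n-1)).filter (fun j => n - j + 1 ≤ r) = Icc (n + 1 - r) (n-1) := by
          ext j; simp only [mem_Icc, mem_filter]; omega
        rw [hset, Finset.sum_const, Nat.card_Icc, nsmul_eq_mul]
        congr 1
        have h1 : (n-1) + 1 - (n + 1 - r) = r - 1 := by omega
        rw [h1, Nat.cast_sub hr.1, Nat.cast_one]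

end Stmt15Aux

open Stmt15Aux ArithmeticFunction ArithmeticFunction.Moebius in
theorem stmt15 (n : ℕ) (hn : 2 ≤ n) :
    ((∑ j ∈ Icc 1 (n - 1), ∑ r ∈ Icc (n - j + 1) (n - 1), Mertens ((n - 1) / r) : ℤ) : ℝ)
      ≥ 3 * ((n : ℝ) - 1) ^ 2 / π ^ 2 - (3 / 2) * ((n : ℝ) - 1) * Real.log ((n : ℝ) - 1)
        - 2 * ((n : ℝ) - 1) := by
  have hm : 1 ≤ n - 1 := by omega
  set m := n - 1 with hmdef
  have hmr : ((n:ℝ) - 1) = (m:ℝ) := by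
    rw [hmdef, Nat.cast_sub (by omega : 1 ≤ n), Nat.cast_one]
  rw [hmr]
  have hm0 : (0:ℝ) < (m:ℝ) := by exact_mod_cast hm
  have hπ : (0:ℝ) < π := Real.pi_pos
  -- integer identities
  set A : ℤ := ∑ d ∈ Icc 1 m, (μ d) * ∑ i ∈ Icc 1 (m/d), (i:ℤ) with hA
  set S2 : ℤ := ∑ r ∈ Icc 2 m, Mertens (m/r) with hS2
  have hsplit : Icc 1 m = insert 1 (Icc 2 m) := by
    ext x; simp only [mem_Icc, Finset.mem_insert]; omega
  have hint : (∑ j ∈ Icc 1 m, ∑ r ∈ Icc (n - j + 1) m, Mertens (m/r))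
      = A - Mertens m - S2 := by
    rw [stepA n hn]
    have e1 : ∑ r ∈ Icc 1 m, ((r:ℤ) - 1) * Mertens (m/r)
        = ∑ r ∈ Icc 1 m, (r:ℤ) * Mertens (m/r) - ∑ r ∈ Icc 1 m, Mertens (m/r) := by
      rw [← Finset.sum_sub_distrib]
      exact Finset.sum_congr rfl fun r _ => by ring
    have e2 : ∑ r ∈ Icc 1 m, (r:ℤ) * Mertens (m/r) = A := by
      rw [hA]
      exact swap_helper m (fun r => (r:ℤ)) (fun i => μ i)
    have e3 : ∑ r ∈ Icc 1 m, Mertens (m/r) = Mertens m + S2 := by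
      rw [hsplit, Finset.sum_insert (by simp), Nat.div_one]
    rw [e1, e2, e3]
    ring
  rw [hint]
  push_cast
  -- real bounds
  have hMer : (Mertens m : ℝ) ≤ (m:ℝ) := by exact_mod_cast mertens_le m
  have hinv := sum_inv_le_log m hm
  have hS2bound : (S2 : ℝ) ≤ (m:ℝ) * Real.log m := by
    have : (S2 : ℝ) = ∑ r ∈ Icc 2 m, (Mertens (m/r) : ℝ) := by push_cast [hS2]; rfl
    rw [this]
    calc ∑ r ∈ Icc 2 m, (Mertens (m/r) : ℝ)
        ≤ ∑ r ∈ Icc 2 m, (m:ℝ) * (1/(r:ℝ)) := by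
          apply Finset.sum_le_sum
          intro r hr
          rw [mem_Icc] at hr
          have hml := mertens_le (m/r)
          calc (Mertens (m/r) : ℝ) ≤ ((m/r : ℕ) : ℝ) := by
                have : (Mertens (m/r) : ℝ) ≤ ((((m/r : ℕ) : ℤ)) : ℝ) := Int.cast_le.mpr hml
                push_cast at this
                exact this
            _ ≤ (m:ℝ)/(r:ℝ) := Nat.cast_div_le
            _ = (m:ℝ) * (1/(r:ℝ)) := by ring
      _ = (m:ℝ) * ∑ r ∈ Icc 2 m, (1/(r:ℝ)) := by rw [Finset.mul_sum]
      _ ≤ (m:ℝ) * Real.log m := by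
          exact mul_le_mul_of_nonneg_left hinv (le_of_lt hm0)
  have hAbound : 3 * (m:ℝ)^2/π^2 - (m:ℝ)/2 - ((m:ℝ)/2) * Real.log m - (m:ℝ)/2 ≤ (A:ℝ) := by
    have hAr : (A:ℝ) = ∑ d ∈ Icc 1 m, (μ d : ℝ) * ∑ i ∈ Icc 1 (m/d), (i:ℝ) := by
      rw [hA]; push_cast; rfl
    have step1 : ∑ d ∈ Icc 1 m,
        ((m:ℝ)^2/2 * ((μ d:ℝ)/(d:ℝ)^2) - (if d = 1 then 0 else ((m:ℝ)/(d:ℝ) + 1)/2))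
        ≤ (A:ℝ) := by
      rw [hAr]
      apply Finset.sum_le_sum
      intro d hd
      rw [mem_Icc] at hd
      exact term_lb m d hm hd.1
    have step2 : ∑ d ∈ Icc 1 m,
        ((m:ℝ)^2/2 * ((μ d:ℝ)/(d:ℝ)^2) - (if d = 1 then 0 else ((m:ℝ)/(d:ℝ) + 1)/2))
        = (m:ℝ)^2/2 * (∑ d ∈ Icc 1 m, (μ d:ℝ)/(d:ℝ)^2)
          - ∑ d ∈ Icc 2 m, ((m:ℝ)/(d:ℝ) + 1)/2 := by
      rw [Finset.sum_sub_distrib, ← Finset.mul_sum]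
      congr 1
      rw [hsplit, Finset.sum_insert (by simp), if_pos rfl, zero_add]
      apply Finset.sum_congr rfl
      intro d hd
      rw [mem_Icc] at hd
      rw [if_neg (by omega)]
    have step3 : ∑ d ∈ Icc 2 m, ((m:ℝ)/(d:ℝ) + 1)/2
        ≤ ((m:ℝ)/2) * Real.log m + (m:ℝ)/2 := by
      have : ∑ d ∈ Icc 2 m, ((m:ℝ)/(d:ℝ) + 1)/2
          = ((m:ℝ)/2) * (∑ d ∈ Icc 2 m, (1/(d:ℝ))) + (Icc 2 m).card * (1/2 : ℝ) := by
        rw [Finset.mul_sum, ← nsmul_eq_mul, ← Finset.sum_const, ← Finset.sum_add_distrib]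
        exact Finset.sum_congr rfl fun d _ => by ring
      rw [this, Nat.card_Icc]
      have hcard : (((m + 1 - 2 : ℕ)):ℝ) ≤ (m:ℝ) := by
        have : m + 1 - 2 ≤ m := by omega
        exact_mod_cast this
      have h1 : ((m:ℝ)/2) * (∑ d ∈ Icc 2 m, (1/(d:ℝ))) ≤ ((m:ℝ)/2) * Real.log m :=
        mul_le_mul_of_nonneg_left hinv (by positivity)
      nlinarith
    have step4 : (m:ℝ)^2/2 * (6/π^2 - 1/(m:ℝ))
        ≤ (m:ℝ)^2/2 * (∑ d ∈ Icc 1 m, (μ d:ℝ)/(d:ℝ)^2) :=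
      mul_le_mul_of_nonneg_left (sum_moebius_div_sq_ge m hm) (by positivity)
    have step5 : (m:ℝ)^2/2 * (6/π^2 - 1/(m:ℝ)) = 3 * (m:ℝ)^2/π^2 - (m:ℝ)/2 := by
      field_simp
      ring
    linarith
  linarith
end

section
/- For every integer n ≥ 95, ∑_{j=1}^{n−1} d_j > 0, where d_j = ∑_{r=n−j+1}^{n−1} M(⌊(n−1)/r⌋). -/
open Finset Real

open ArithmeticFunction ArithmeticFunction.Moebius ArithmeticFunction.zeta in
lemma aux_totient (k : ℕ) (hk : 0 < k) :
    ∑ x ∈ k.divisorsAntidiagonal, (μ x.1 : ℤ) * x.2 = (Nat.totient k : ℤ) := by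
  have h := (sum_eq_iff_sum_smul_moebius_eq (R := ℤ)
      (f := fun i => (Nat.totient i : ℤ)) (g := fun n => (n : ℤ))).mp ?_ k hk
  · simpa [zsmul_eq_mul] using h
  · intro m _
    exact_mod_cast congrArg (fun x : ℕ => (x : ℤ)) (Nat.sum_totient m)

open ArithmeticFunction ArithmeticFunction.Moebius ArithmeticFunction.zeta in
lemma aux_moebius (k : ℕ) (_hk : 0 < k) :
    ∑ x ∈ k.divisorsAntidiagonal, (μ x.1 : ℤ) = if k = 1 then 1 else 0 := by
  have h1 : (μ * ζ : ArithmeticFunction ℤ) k = ∑ d ∈ k.divisors, μ d :=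
    by simpa using coe_mul_zeta_apply (f := (μ : ArithmeticFunction ℤ)) (x := k)
  have h2 : ∑ x ∈ k.divisorsAntidiagonal, (μ x.1 : ℤ) = ∑ d ∈ k.divisors, μ d :=
    Nat.sum_divisorsAntidiagonal (fun a b => (μ a : ℤ))
  rw [h2, ← h1, moebius_mul_coe_zeta, one_apply]

open ArithmeticFunction ArithmeticFunction.Moebius ArithmeticFunction.zeta in
lemma aux_inner (k : ℕ) (hk : 0 < k) :
    ∑ x ∈ k.divisorsAntidiagonal, ((x.1 : ℤ) - 1) * μ x.2
      = (Nat.totient k : ℤ) - (if k = 1 then 1 else 0) := by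
  have hswap : ∑ x ∈ k.divisorsAntidiagonal, ((x.1 : ℤ) - 1) * μ x.2
      = ∑ x ∈ k.divisorsAntidiagonal, ((x.2 : ℤ) - 1) * μ x.1 := by
    rw [Nat.sum_divisorsAntidiagonal (fun a b => ((a : ℤ) - 1) * μ b),
      Nat.sum_divisorsAntidiagonal' (fun a b => ((b : ℤ) - 1) * μ a)]
  rw [hswap]
  have : ∀ x : ℕ × ℕ, ((x.2 : ℤ) - 1) * μ x.1 = (μ x.1 : ℤ) * x.2 - (μ x.1 : ℤ) := by
    intro x; ring
  rw [Finset.sum_congr rfl fun x _ => this x, Finset.sum_sub_distrib,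
    aux_totient k hk, aux_moebius k hk]

open ArithmeticFunction ArithmeticFunction.Moebius ArithmeticFunction.zeta in
lemma aux_key (N : ℕ) :
    ∑ r ∈ Icc 1 N, ((r : ℤ) - 1) * Mertens (N / r)
      = ∑ k ∈ Icc 1 N, ((Nat.totient k : ℤ) - (if k = 1 then 1 else 0)) := by
  have lhs_eq : ∑ r ∈ Icc 1 N, ((r : ℤ) - 1) * Mertens (N / r)
      = ∑ r ∈ Icc 1 N, ∑ m ∈ Icc 1 (N / r), ((r : ℤ) - 1) * μ m := by
    refine Finset.sum_congr rfl fun r _ => ?_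
    rw [Mertens, Finset.mul_sum]
  have rhs_eq : ∑ k ∈ Icc 1 N, ((Nat.totient k : ℤ) - (if k = 1 then 1 else 0))
      = ∑ k ∈ Icc 1 N, ∑ x ∈ k.divisorsAntidiagonal, ((x.1 : ℤ) - 1) * μ x.2 := by
    refine Finset.sum_congr rfl fun k hk => ?_
    rw [aux_inner k (by simp at hk; omega)]
  rw [lhs_eq, rhs_eq]
  rw [Finset.sum_sigma', Finset.sum_sigma']
  refine Finset.sum_nbij' (fun x => ⟨x.1 * x.2, (x.1, x.2)⟩) (fun x => ⟨x.2.1, x.2.2⟩)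
    ?_ ?_ ?_ ?_ ?_
  · rintro ⟨r, m⟩ h
    simp only [Finset.mem_sigma, Finset.mem_Icc, Nat.mem_divisorsAntidiagonal] at h ⊢
    obtain ⟨⟨hr1, hrN⟩, hm1, hmN⟩ := h
    have hrm : r * m ≤ N := by
      rw [mul_comm]
      exact (Nat.le_div_iff_mul_le (by omega : 0 < r)).mp hmN
    refine ⟨⟨?_, hrm⟩, ?_, Nat.mul_ne_zero (by omega) (by omega)⟩
    · exact Nat.one_le_iff_ne_zero.mpr (Nat.mul_ne_zero (by omega) (by omega))
    · trivial
  · rintro ⟨k, a, b⟩ h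
    simp only [Finset.mem_sigma, Finset.mem_Icc, Nat.mem_divisorsAntidiagonal] at h ⊢
    obtain ⟨⟨hk1, hkN⟩, hab, hk0⟩ := h
    have ha : 0 < a := Nat.pos_of_ne_zero (by rintro rfl; simp at hab; omega)
    have hb : 0 < b := Nat.pos_of_ne_zero (by rintro rfl; simp at hab; omega)
    refine ⟨⟨ha, by nlinarith⟩, hb, ?_⟩
    rw [Nat.le_div_iff_mul_le ha, mul_comm]
    omega
  · rintro ⟨r, m⟩ h; rfl
  · rintro ⟨k, a, b⟩ h
    simp only [Finset.mem_sigma, Nat.mem_divisorsAntidiagonal] at h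
    obtain ⟨-, hab, -⟩ := h
    simp [hab]
  · rintro ⟨r, m⟩ h; rfl

theorem stmt16 (n : ℕ) (hn : 95 ≤ n) :
    0 < ∑ j ∈ Icc 1 (n - 1), ∑ r ∈ Icc (n - j + 1) (n - 1), Mertens ((n - 1) / r) := by
  set N := n - 1 with hN
  have hN94 : 94 ≤ N := by omega
  -- swap the order of summation
  have hswap : ∑ j ∈ Icc 1 N, ∑ r ∈ Icc (n - j + 1) N, Mertens (N / r)
      = ∑ r ∈ Icc 1 N, ∑ j ∈ Icc (n - r + 1) N, Mertens (N / r) := by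
    refine Finset.sum_comm' ?_
    intro j r
    simp only [Finset.mem_Icc]
    omega
  rw [hswap]
  have hcount : ∑ r ∈ Icc 1 N, ∑ j ∈ Icc (n - r + 1) N, Mertens (N / r)
      = ∑ r ∈ Icc 1 N, ((r : ℤ) - 1) * Mertens (N / r) := by
    refine Finset.sum_congr rfl fun r hr => ?_
    simp only [Finset.mem_Icc] at hr
    rw [Finset.sum_const, Nat.card_Icc]
    have hcard : N + 1 - (n - r + 1) = r - 1 := by omega
    rw [hcard, nsmul_eq_mul]
    congr 1
    push_cast [Nat.cast_sub hr.1]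
    ring
  rw [hcount, aux_key N]
  rw [Finset.sum_sub_distrib]
  have h1 : ∑ k ∈ Icc 1 N, (if k = 1 then (1 : ℤ) else 0) = 1 := by
    rw [Finset.sum_ite_eq' (Icc 1 N) 1 (fun _ => (1 : ℤ))]
    simp; omega
  rw [h1]
  have h2 : (N : ℤ) ≤ ∑ k ∈ Icc 1 N, (Nat.totient k : ℤ) := by
    have : ∀ k ∈ Icc 1 N, (1 : ℤ) ≤ (Nat.totient k : ℤ) := by
      intro k hk
      simp only [Finset.mem_Icc] at hk
      exact_mod_cast Nat.totient_pos.mpr (by omega)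
    calc (N : ℤ) = ∑ _k ∈ Icc 1 N, (1 : ℤ) := by simp
      _ ≤ _ := Finset.sum_le_sum this
  omega
end

section
/- For every integer n ≥ 95, the sum of |d_j| over those indices j with 9n/10 < j ≤ n − 1 and d_j < 0 is at most 0.342·n², where d_j = ∑_{r=n−j+1}^{n−1} M(⌊(n−1)/r⌋). -/
open Finset Real

open ArithmeticFunction ArithmeticFunction.Moebius in
lemma absmu (s : ℕ) : |μ s| ≤ 1 := by
  by_cases h : Squarefree s
  · exact le_of_eq (abs_moebius_eq_one_of_squarefree h)
  · simp [moebius_eq_zero_of_not_squarefree h]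

open ArithmeticFunction ArithmeticFunction.Moebius in
lemma keyj (m k : ℕ) : ∑ r ∈ Icc (k+1) m, Mertens (m / r) =
    ∑ s ∈ Icc 1 m, ((m / s - k : ℕ) : ℤ) * μ s := by
  unfold Mertens
  have h1 : ∀ r ∈ Icc (k+1) m, (∑ i ∈ Icc 1 (m / r), μ i) =
      ∑ s ∈ Icc 1 m, if r * s ≤ m then μ s else 0 := by
    intro r hr
    rw [← Finset.sum_filter]
    apply Finset.sum_congr _ (fun _ _ => rfl)
    ext s
    simp only [mem_filter, mem_Icc]
    have hr1 : 1 ≤ r := le_trans (Nat.le_add_left 1 k) (mem_Icc.mp hr).1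
    constructor
    · rintro ⟨h1, h2⟩
      have hrs : r * s ≤ m := by
        rw [mul_comm]
        exact (Nat.le_div_iff_mul_le (by omega)).mp h2
      exact ⟨⟨h1, le_trans (Nat.le_mul_of_pos_left s hr1) hrs⟩, hrs⟩
    · rintro ⟨⟨h1, _⟩, h3⟩
      exact ⟨h1, (Nat.le_div_iff_mul_le (by omega)).mpr (by rw [mul_comm]; exact h3)⟩
  rw [Finset.sum_congr rfl h1, Finset.sum_comm]
  refine Finset.sum_congr rfl fun s hs => ?_
  rw [← Finset.sum_filter]
  have hs1 : 1 ≤ s := (mem_Icc.mp hs).1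
  have h2 : (Icc (k+1) m).filter (fun r => r * s ≤ m) = Icc (k+1) (m / s) := by
    ext r
    simp only [mem_filter, mem_Icc]
    constructor
    · rintro ⟨⟨h1, _⟩, h3⟩
      exact ⟨h1, (Nat.le_div_iff_mul_le (by omega)).mpr h3⟩
    · rintro ⟨h1, h2⟩
      have h3 : r * s ≤ m := (Nat.le_div_iff_mul_le (by omega)).mp h2
      exact ⟨⟨h1, le_trans (Nat.le_mul_of_pos_right r (by omega)) h3⟩, h3⟩
  rw [h2, Finset.sum_const, Nat.card_Icc, nsmul_eq_mul]
  congr 2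
  omega

lemma tri (q K : ℕ) : ∑ k ∈ Icc 1 K, (q - k) ≤ q * q / 2 := by
  calc ∑ k ∈ Icc 1 K, (q - k)
      = ∑ k ∈ (Icc 1 K).filter (fun k => k < q), (q - k) := by
        rw [Finset.sum_filter_of_ne]
        intro x _ hx
        omega
    _ ≤ ∑ k ∈ Icc 1 (q-1), (q - k) := by
        apply Finset.sum_le_sum_of_subset
        intro x hx
        simp only [mem_filter, mem_Icc] at hx ⊢
        omega
    _ = ∑ i ∈ Icc 1 (q-1), i := by
        apply Finset.sum_nbij' (fun k => q - k) (fun k => q - k) <;>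
          (intro a ha; simp only [mem_Icc] at *) <;> omega
    _ ≤ q * q / 2 := by
        have h1 := Finset.sum_range_id_mul_two q
        have h2 : ∑ i ∈ Finset.range q, i = ∑ i ∈ Icc 1 (q-1), i := by
          rcases Nat.eq_zero_or_pos q with h | h
          · subst h; simp
          · rw [← Finset.Ico_add_one_right_eq_Icc, show q - 1 + 1 = q by omega,
              Finset.range_eq_Ico, Finset.sum_eq_sum_Ico_succ_bot h]
            simp
        have h3 : q * (q - 1) ≤ q * q := Nat.mul_le_mul_left _ (by omega)
        omega

lemma stepA (m k : ℕ) : |((∑ r ∈ Icc (k+1) m, Mertens (m/r) : ℤ) : ℝ)| ≤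
    ∑ s ∈ Icc 1 m, ((m / s - k : ℕ) : ℝ) := by
  rw [← Int.cast_abs]
  have h : |(∑ r ∈ Icc (k+1) m, Mertens (m/r) : ℤ)| ≤ ∑ s ∈ Icc 1 m, ((m / s - k : ℕ) : ℤ) := by
    rw [keyj m k]
    refine le_trans (Finset.abs_sum_le_sum_abs _ _) (Finset.sum_le_sum fun s _ => ?_)
    rw [abs_mul, abs_of_nonneg (by positivity : (0:ℤ) ≤ ((m / s - k : ℕ) : ℤ))]
    calc ((m / s - k : ℕ) : ℤ) * |ArithmeticFunction.moebius s|
        ≤ ((m / s - k : ℕ) : ℤ) * 1 := by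
          exact mul_le_mul_of_nonneg_left (absmu s) (by positivity)
      _ = _ := mul_one _
  calc ((|(∑ r ∈ Icc (k+1) m, Mertens (m/r) : ℤ)| : ℤ) : ℝ)
      ≤ ((∑ s ∈ Icc 1 m, ((m / s - k : ℕ) : ℤ) : ℤ) : ℝ) := by exact_mod_cast h
    _ = _ := by push_cast; ring

theorem stmt18 (n : ℕ) (hn : 95 ≤ n) :
    ∑ j ∈ (Icc 1 (n - 1)).filter
        (fun j : ℕ => 9 * (n : ℝ) / 10 < (j : ℝ) ∧
          (∑ r ∈ Icc (n - j + 1) (n - 1), Mertens ((n - 1) / r)) < 0),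
      |((∑ r ∈ Icc (n - j + 1) (n - 1), Mertens ((n - 1) / r) : ℤ) : ℝ)|
      ≤ 0.342 * (n : ℝ) ^ 2 := by
  set m : ℕ := n - 1 with hm
  set K : ℕ := (n - 1) / 10 with hK
  set F := (Icc 1 (n - 1)).filter
      (fun j : ℕ => 9 * (n : ℝ) / 10 < (j : ℝ) ∧
        (∑ r ∈ Icc (n - j + 1) (n - 1), Mertens ((n - 1) / r)) < 0) with hF
  set B : ℕ → ℝ := fun k => ∑ s ∈ Icc 1 m, ((m / s - k : ℕ) : ℝ) with hB
  have hBnonneg : ∀ k, 0 ≤ B k := fun k => Finset.sum_nonneg fun s _ => by positivity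
  -- membership facts
  have hmemF : ∀ j ∈ F, 1 ≤ j ∧ j ≤ n - 1 ∧ 9 * (n:ℝ)/10 < (j:ℝ) := by
    intro j hj
    rw [hF, mem_filter, mem_Icc] at hj
    exact ⟨hj.1.1, hj.1.2, hj.2.1⟩
  -- Step A applied pointwise
  have step1 : ∑ j ∈ F, |((∑ r ∈ Icc (n - j + 1) (n - 1), Mertens ((n - 1) / r) : ℤ) : ℝ)|
      ≤ ∑ j ∈ F, B (n - j) := by
    apply Finset.sum_le_sum
    intro j hj
    have := stepA m (n - j)
    simpa [hm] using this
  -- reindex by k = n - j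
  have step2 : ∑ j ∈ F, B (n - j) ≤ ∑ k ∈ Icc 1 K, B k := by
    have himg : ∑ k ∈ F.image (fun j => n - j), B k = ∑ j ∈ F, B (n - j) := by
      apply Finset.sum_image
      intro x hx y hy hxy
      have h1 := hmemF x hx
      have h2 := hmemF y hy
      simp only at hxy
      omega
    rw [← himg]
    apply Finset.sum_le_sum_of_subset_of_nonneg
    · intro k hk
      rw [Finset.mem_image] at hk
      obtain ⟨j, hj, rfl⟩ := hk
      obtain ⟨h1, h2, h3⟩ := hmemF j hj
      rw [mem_Icc]
      constructor
      · omega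
      · -- n - j ≤ (n-1)/10 : from 9n/10 < j
        have h10 : 9 * n < 10 * j := by
          have hr : (9 * n : ℝ) < 10 * j := by push_cast; linarith
          exact_mod_cast hr
        rw [hK]
        rw [Nat.le_div_iff_mul_le (by norm_num)]
        omega
    · intro k _ _
      exact hBnonneg k
  -- swap sums and split
  have step3 : ∑ k ∈ Icc 1 K, B k ≤ (K:ℝ) * m * (7129/2520) + (m:ℝ)^2/18 := by
    rw [hB]
    rw [Finset.sum_comm]
    have hsplit : (Icc 1 m : Finset ℕ) = Ioc 0 m := by
      ext x; simp [Nat.lt_iff_add_one_le]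
    have hm9 : 9 ≤ m := by omega
    rw [hsplit, ← Finset.sum_Ioc_consecutive _ (by norm_num : (0:ℕ) ≤ 9) hm9]
    have part1 : ∑ s ∈ Ioc 0 9, (∑ k ∈ Icc 1 K, ((m / s - k : ℕ) : ℝ))
        ≤ (K:ℝ) * m * (7129/2520) := by
      have hb : ∀ s ∈ Ioc (0:ℕ) 9, (∑ k ∈ Icc 1 K, ((m / s - k : ℕ) : ℝ))
          ≤ (K:ℝ) * ((m:ℝ)/s) := by
        intro s hs
        have hs1 : 1 ≤ s ∧ s ≤ 9 := by simpa [Nat.lt_iff_add_one_le] using mem_Ioc.mp hs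
        calc (∑ k ∈ Icc 1 K, ((m / s - k : ℕ) : ℝ))
            ≤ ∑ k ∈ Icc 1 K, ((m / s : ℕ) : ℝ) := by
              apply Finset.sum_le_sum
              intro k _
              exact_mod_cast Nat.cast_le.mpr (Nat.sub_le _ _)
          _ = (K:ℝ) * ((m / s : ℕ) : ℝ) := by
              rw [Finset.sum_const, Nat.card_Icc]
              simp
          _ ≤ (K:ℝ) * ((m:ℝ)/s) := by
              apply mul_le_mul_of_nonneg_left (Nat.cast_div_le) (by positivity)
      calc ∑ s ∈ Ioc (0:ℕ) 9, (∑ k ∈ Icc 1 K, ((m / s - k : ℕ) : ℝ))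
          ≤ ∑ s ∈ Ioc (0:ℕ) 9, (K:ℝ) * ((m:ℝ)/(s:ℝ)) := Finset.sum_le_sum hb
        _ = (K:ℝ) * m * (7129/2520) := by
            rw [show (Ioc 0 9 : Finset ℕ) = {1,2,3,4,5,6,7,8,9} by decide]
            simp [Finset.sum_insert, Finset.mem_insert]
            norm_num
            ring
    have part2 : ∑ s ∈ Ioc 9 m, (∑ k ∈ Icc 1 K, ((m / s - k : ℕ) : ℝ))
        ≤ (m:ℝ)^2/18 := by
      have hb : ∀ s ∈ Ioc (9:ℕ) m, (∑ k ∈ Icc 1 K, ((m / s - k : ℕ) : ℝ))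
          ≤ (m:ℝ)^2/2 * ((s:ℝ)^2)⁻¹ := by
        intro s hs
        have hs9 : 9 < s := (mem_Ioc.mp hs).1
        have hq : ((m / s : ℕ) : ℝ) ≤ (m:ℝ)/s := Nat.cast_div_le
        have htri := tri (m / s) K
        calc (∑ k ∈ Icc 1 K, ((m / s - k : ℕ) : ℝ))
            = ((∑ k ∈ Icc 1 K, (m / s - k) : ℕ) : ℝ) := by push_cast; rfl
          _ ≤ (((m/s) * (m/s) / 2 : ℕ) : ℝ) := by exact_mod_cast htri
          _ ≤ ((m/s : ℕ):ℝ) * ((m/s : ℕ):ℝ) / 2 := by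
              calc (((m/s) * (m/s) / 2 : ℕ) : ℝ) ≤ (((m/s) * (m/s) : ℕ) : ℝ) / 2 := by
                    apply Nat.cast_div_le
                _ = _ := by push_cast; ring
          _ ≤ ((m:ℝ)/s) * ((m:ℝ)/s) / 2 := by
              apply div_le_div_of_nonneg_right ?_ (by norm_num)
              · apply mul_le_mul hq hq (by positivity) (by positivity)
          _ = (m:ℝ)^2/2 * ((s:ℝ)^2)⁻¹ := by
              field_simp
      calc ∑ s ∈ Ioc (9:ℕ) m, (∑ k ∈ Icc 1 K, ((m / s - k : ℕ) : ℝ))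
          ≤ ∑ s ∈ Ioc (9:ℕ) m, (m:ℝ)^2/2 * ((s:ℝ)^2)⁻¹ := Finset.sum_le_sum hb
        _ = (m:ℝ)^2/2 * ∑ s ∈ Ioc 9 m, ((s:ℝ)^2)⁻¹ := by rw [Finset.mul_sum]
        _ ≤ (m:ℝ)^2/2 * ((9:ℝ)⁻¹ - (m:ℝ)⁻¹) := by
            apply mul_le_mul_of_nonneg_left ?_ (by positivity)
            exact_mod_cast sum_Ioc_inv_sq_le_sub (by norm_num) hm9
        _ ≤ (m:ℝ)^2/18 := by
            have hmpos : (0:ℝ) < m := by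
              have : (9:ℕ) ≤ m := hm9
              push_cast
              norm_num
              omega
            have : (0:ℝ) ≤ (m:ℝ)⁻¹ := by positivity
            nlinarith
    linarith
  -- final numeric bound
  have hKle : (K:ℝ) ≤ (n:ℝ)/10 := by
    calc (K:ℝ) ≤ ((n-1 : ℕ):ℝ)/10 := by exact_mod_cast Nat.cast_div_le
      _ ≤ (n:ℝ)/10 := by
        apply div_le_div_of_nonneg_right ?_ (by norm_num)
        exact_mod_cast Nat.sub_le n 1
  have hmle : (m:ℝ) ≤ (n:ℝ) := by exact_mod_cast Nat.sub_le n 1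
  have hmnonneg : (0:ℝ) ≤ m := by positivity
  have hKnonneg : (0:ℝ) ≤ K := by positivity
  calc ∑ j ∈ F, |((∑ r ∈ Icc (n - j + 1) (n - 1), Mertens ((n - 1) / r) : ℤ) : ℝ)|
      ≤ (K:ℝ) * m * (7129/2520) + (m:ℝ)^2/18 := le_trans step1 (le_trans step2 step3)
    _ ≤ ((n:ℝ)/10) * n * (7129/2520) + (n:ℝ)^2/18 := by
        apply add_le_add
        · apply mul_le_mul_of_nonneg_right ?_ (by norm_num)
          exact mul_le_mul hKle hmle hmnonneg (by positivity)
        · apply div_le_div_of_nonneg_right ?_ (by norm_num)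
          exact pow_le_pow_left₀ hmnonneg hmle 2
    _ ≤ 0.342 * (n : ℝ) ^ 2 := by nlinarith [sq_nonneg (n:ℝ)]
end

section
/- For every integer n ≥ 95, ∑_{j=1}^{⌊n/2⌋} d_j ≥ (n² − 4n + 3)/8, where d_j = ∑_{r=n−j+1}^{n−1} M(⌊(n−1)/r⌋). -/
open Finset Real

theorem stmt19 (n : ℕ) (hn : 95 ≤ n) :
    ((∑ j ∈ Icc 1 (n / 2), ∑ r ∈ Icc (n - j + 1) (n - 1), Mertens ((n - 1) / r) : ℤ) : ℝ)
      ≥ ((n : ℝ) ^ 2 - 4 * n + 3) / 8 := by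
  have hinner : ∀ j ∈ Icc 1 (n / 2),
      (∑ r ∈ Icc (n - j + 1) (n - 1), Mertens ((n - 1) / r)) = (j : ℤ) - 1 := by
    intro j hj
    simp only [mem_Icc] at hj
    have h1 : ∀ r ∈ Icc (n - j + 1) (n - 1), Mertens ((n - 1) / r) = 1 := by
      intro r hr
      simp only [mem_Icc] at hr
      have hdiv : (n - 1) / r = 1 := by
        apply Nat.div_eq_of_lt_le <;> omega
      rw [hdiv]; simp [Mertens]
    rw [Finset.sum_congr rfl h1, Finset.sum_const, Nat.card_Icc, nsmul_eq_mul, mul_one]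
    have : n - 1 + 1 - (n - j + 1) = j - 1 := by omega
    rw [this, Nat.cast_sub hj.1, Nat.cast_one]
  rw [Finset.sum_congr rfl hinner]
  have h2 : (∑ j ∈ Icc 1 (n / 2), ((j : ℤ) - 1)) * 2 = (n / 2 : ℕ) ^ 2 - (n / 2 : ℕ) := by
    induction (n / 2) with
    | zero => simp
    | succ m ih =>
      rw [Finset.sum_Icc_succ_top (by omega)]
      push_cast
      push_cast at ih
      linarith
  have h2' : ((∑ j ∈ Icc 1 (n / 2), ((j : ℤ) - 1) : ℤ) : ℝ) * 2
      = ((n / 2 : ℕ) : ℝ) ^ 2 - ((n / 2 : ℕ) : ℝ) := by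
    exact_mod_cast congrArg (Int.cast : ℤ → ℝ) h2
  have hle : (n : ℝ) ≤ 2 * ((n / 2 : ℕ) : ℝ) + 1 := by
    have : n ≤ 2 * (n / 2) + 1 := by omega
    exact_mod_cast this
  have hge : 2 * ((n / 2 : ℕ) : ℝ) ≤ (n : ℝ) := by
    have : 2 * (n / 2) ≤ n := by omega
    exact_mod_cast this
  have hn' : (95 : ℝ) ≤ (n : ℝ) := by exact_mod_cast hn
  rw [ge_iff_le, div_le_iff₀ (by norm_num : (0:ℝ) < 8)]
  nlinarith [h2']
end
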